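/- Let G be a finite nonabelian group such that M(G,2) has a nontrivial half-automorphism. Then the center Z(G) is a nontrivial elementary abelian 2-group, i.e., Z(G) ≅ C₂^m for some m ≥ 1. -/

import Mathlib

/-- The Chein loop multiplication on `M(G,2) = G × Bool`,
where `(g, false)` represents `g` and `(g, true)` represents `gu`. -/
def cmul {G : Type*} [Group G] : G × Bool → G × Bool → G × Bool
  | (g, false), (h, false) => (g * h, false)
  | (g, false), (h, true)  => (h * g, true)
  | (g, true),  (h, false) => (g * h⁻¹, true)
  | (g, true),  (h, true)  => (h⁻¹ * g, false)

/-- A half-automorphism of the Chein loop `M(G,2)`. -/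
def IsHalfAut {G : Type*} [Group G] (f : G × Bool → G × Bool) : Prop :=
  Function.Bijective f ∧
    ∀ x y, f (cmul x y) = cmul (f x) (f y) ∨ f (cmul x y) = cmul (f y) (f x)


/-- Generic two-sided multiplication/cancellation helper. -/
lemma grw {H : Type*} [Group H] (w v : H) {A B C D : H} (e : A = B)
    (hC : C = w * A * v) (hD : D = w * B * v) : C = D := by rw [hC, hD, e]

section Scott
variable {G H : Type*} [Group G] [Group H] (φ : G → H)

/-- Strict homomorphic pair. -/
def SP (a b : G) : Prop := φ (a*b) = φ a * φ b ∧ φ a * φ b ≠ φ b * φ a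
/-- Strict antihomomorphic pair. -/
def SM (a b : G) : Prop := φ (a*b) = φ b * φ a ∧ φ a * φ b ≠ φ b * φ a

variable (hinj : Function.Injective φ)
  (hh : ∀ x y, φ (x*y) = φ x * φ y ∨ φ (x*y) = φ y * φ x)

section basic
include hh

lemma sc_one : φ 1 = 1 := by
  rcases hh 1 1 with h | h <;>
  · rw [one_mul] at h
    exact grw (φ 1)⁻¹ 1 h.symm (by group) (by group)

lemma sc_sq (x : G) : φ (x*x) = φ x * φ x := by
  rcases hh x x with h | h <;> exact h

lemma sc_inv (x : G) : φ x⁻¹ = (φ x)⁻¹ := by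
  rcases hh x x⁻¹ with h | h <;>
    rw [mul_inv_cancel, sc_one φ hh] at h
  · exact (grw (φ x)⁻¹ 1 h (by group) (by group)).symm
  · exact (grw 1 (φ x)⁻¹ h (by group) (by group)).symm

lemma sc_abb {a b : G} (hab : φ (a*b) = φ a * φ b) (hne : φ a * φ b ≠ φ b * φ a) :
    φ (a*(b*b)) = φ a * (φ b * φ b) := by
  have e1 := hh (a*b) b
  have hA : (a*b)*b = a*(b*b) := by group
  rw [hA, hab] at e1
  have e2 := hh a (b*b)
  rw [sc_sq φ hh] at e2
  rcases e1 with e1 | e1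
  · rw [e1]; group
  · rcases e2 with e2 | e2
    · exact absurd (hne (grw 1 (φ b)⁻¹ (e1.symm.trans e2).symm (by group) (by group))) id
    · exact absurd (hne (grw (φ b)⁻¹ 1 (e1.symm.trans e2) (by group) (by group))) id

lemma sc_aab {a b : G} (hab : φ (a*b) = φ a * φ b) (hne : φ a * φ b ≠ φ b * φ a) :
    φ ((a*a)*b) = (φ a * φ a) * φ b := by
  have e1 := hh a (a*b)
  have hA : a*(a*b) = (a*a)*b := by group
  rw [hA, hab] at e1
  have e2 := hh (a*a) b
  rw [sc_sq φ hh] at e2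
  rcases e1 with e1 | e1
  · rw [e1]; group
  · rcases e2 with e2 | e2
    · exact absurd (hne (grw (φ a)⁻¹ 1 (e1.symm.trans e2).symm (by group) (by group))) id
    · exact absurd (hne (grw 1 (φ a)⁻¹ (e1.symm.trans e2) (by group) (by group))) id

/-- no strict commuting pairs -/
lemma sc_comm_core {a b : G} (hc : a*b = b*a) (hab : φ (a*b) = φ a * φ b) :
    φ a * φ b = φ b * φ a := by
  by_contra hne
  have h1 : φ ((a*b)*(a*b)) = (φ a * φ b) * (φ a * φ b) := by
    rw [sc_sq φ hh, hab]
  have hel2 : b*(a*b) = a*(b*b) := by rw [← mul_assoc, ← hc]; group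
  have e4 := hh a (b*(a*b))
  rw [hel2, sc_abb φ hh hab hne] at e4
  have hel3 : a*(a*(b*b)) = (a*b)*(a*b) := by
    rw [mul_assoc a b (a*b), ← mul_assoc b a b, ← hc]; group
  rw [hel3, h1] at e4
  rcases e4 with e4 | e4
  · exact hne (grw (φ a)⁻¹ (φ b)⁻¹ e4 (by group) (by group)).symm
  · exact hne (grw ((φ a)*(φ b))⁻¹ 1 e4 (by group) (by group))

lemma sc_comm {a b : G} (hc : a*b = b*a) : φ a * φ b = φ b * φ a := by
  rcases hh a b with h | h
  · exact sc_comm_core φ hh hc h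
  · have h' : φ (b*a) = φ b * φ a := by rw [← hc]; exact h
    exact (sc_comm_core φ hh hc.symm h').symm

lemma sc_ne_comm {a b : G} (hne : φ a * φ b ≠ φ b * φ a) : a*b ≠ b*a :=
  fun hc => hne (sc_comm φ hh hc)

lemma sp_a_ab {a b : G} (h : SP φ a b) : SP φ a (a*b) := by
  obtain ⟨hab, hne⟩ := h
  constructor
  · rw [← mul_assoc, sc_aab φ hh hab hne, hab]; group
  · rw [hab]
    intro e
    exact hne (grw (φ a)⁻¹ 1 e (by group) (by group))

lemma sp_ab_b {a b : G} (h : SP φ a b) : SP φ (a*b) b := by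
  obtain ⟨hab, hne⟩ := h
  constructor
  · rw [mul_assoc, sc_abb φ hh hab hne, hab]; group
  · rw [hab]
    intro e
    exact hne (grw 1 (φ b)⁻¹ e (by group) (by group))

lemma sm_aab {a b : G} (hab : φ (a*b) = φ b * φ a) (hne : φ a * φ b ≠ φ b * φ a) :
    φ ((a*a)*b) = φ b * (φ a * φ a) := by
  have e1 := hh a (a*b)
  have hA : a*(a*b) = (a*a)*b := by group
  rw [hA, hab] at e1
  have e2 := hh (a*a) b
  rw [sc_sq φ hh] at e2
  rcases e1 with e1 | e1
  · rcases e2 with e2 | e2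
    · exact absurd (hne (grw (φ a)⁻¹ 1 (e1.symm.trans e2) (by group) (by group)).symm) id
    · exact absurd (hne (grw 1 (φ a)⁻¹ (e1.symm.trans e2) (by group) (by group))) id
  · rw [e1]; group

lemma sm_abb {a b : G} (hab : φ (a*b) = φ b * φ a) (hne : φ a * φ b ≠ φ b * φ a) :
    φ (a*(b*b)) = (φ b * φ b) * φ a := by
  have e1 := hh (a*b) b
  have hA : (a*b)*b = a*(b*b) := by group
  rw [hA, hab] at e1
  have e2 := hh a (b*b)
  rw [sc_sq φ hh] at e2
  rcases e1 with e1 | e1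
  · rcases e2 with e2 | e2
    · exact absurd (hne (grw 1 (φ b)⁻¹ (e1.symm.trans e2) (by group) (by group)).symm) id
    · exact absurd (hne (grw (φ b)⁻¹ 1 (e1.symm.trans e2) (by group) (by group))) id
  · rw [e1]; group

lemma sm_a_ab {a b : G} (h : SM φ a b) : SM φ a (a*b) := by
  obtain ⟨hab, hne⟩ := h
  constructor
  · rw [← mul_assoc, sm_aab φ hh hab hne, hab]; group
  · rw [hab]
    intro e
    exact hne (grw 1 (φ a)⁻¹ e (by group) (by group))

lemma sm_ab_b {a b : G} (h : SM φ a b) : SM φ (a*b) b := by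
  obtain ⟨hab, hne⟩ := h
  constructor
  · rw [mul_assoc, sm_abb φ hh hab hne, hab]; group
  · rw [hab]
    intro e
    exact hne (grw (φ b)⁻¹ 1 e (by group) (by group))

lemma sp_inv {a b : G} (h : SP φ a b) : SP φ b⁻¹ a⁻¹ := by
  obtain ⟨hab, hne⟩ := h
  constructor
  · have hA : b⁻¹ * a⁻¹ = (a*b)⁻¹ := by group
    rw [hA, sc_inv φ hh, hab, sc_inv φ hh, sc_inv φ hh]; group
  · rw [sc_inv φ hh, sc_inv φ hh]
    intro e
    have e2 := congrArg (fun x => x⁻¹) e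
    simp only [mul_inv_rev, inv_inv] at e2
    exact hne e2

lemma sm_inv {a b : G} (h : SM φ a b) : SM φ b⁻¹ a⁻¹ := by
  obtain ⟨hab, hne⟩ := h
  constructor
  · have hA : b⁻¹ * a⁻¹ = (a*b)⁻¹ := by group
    rw [hA, sc_inv φ hh, hab, sc_inv φ hh, sc_inv φ hh]; group
  · rw [sc_inv φ hh, sc_inv φ hh]
    intro e
    have e2 := congrArg (fun x => x⁻¹) e
    simp only [mul_inv_rev, inv_inv] at e2
    exact hne e2

end basic

section strict
include hinj hh

lemma sp_swap {a b : G} (h : SP φ a b) : SP φ b a := by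
  obtain ⟨hab, hne⟩ := h
  rcases hh b a with h' | h'
  · exact ⟨h', fun e => hne e.symm⟩
  · rw [← hab] at h'
    exact absurd (hinj h') (sc_ne_comm φ hh (fun e => hne e.symm))

lemma sm_swap {a b : G} (h : SM φ a b) : SM φ b a := by
  obtain ⟨hab, hne⟩ := h
  rcases hh b a with h' | h'
  · rw [← hab] at h'
    exact absurd (hinj h') (sc_ne_comm φ hh (fun e => hne e.symm))
  · exact ⟨h', fun e => hne e.symm⟩

lemma sp_aba {a b : G} (h : SP φ a b) : φ (a*b*a) = φ a * φ b * φ a := by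
  obtain ⟨hab, hne⟩ := h
  rcases hh (a*b) a with e | e
  · rw [e, hab]
  · exfalso
    have h2 : φ (a*(a*b)) = φ a * φ (a*b) := (sp_a_ab φ hh ⟨hab, hne⟩).1
    rw [← h2] at e
    have := hinj e
    have hcomm : b*a = a*b := mul_left_cancel (show a*(b*a) = a*(a*b) by
      rw [← mul_assoc]; exact this)
    exact sc_ne_comm φ hh hne hcomm.symm

lemma sp_a_ba {a b : G} (h : SP φ a b) : SP φ a (b*a) := by
  have hsw := sp_swap φ hinj hh h
  constructor
  · rw [← mul_assoc, sp_aba φ hinj hh h, hsw.1]; group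
  · rw [hsw.1]
    intro e
    exact h.2 (grw 1 (φ a)⁻¹ e (by group) (by group))

lemma sp_ba_a {a b : G} (h : SP φ a b) : SP φ (b*a) a :=
  sp_swap φ hinj hh (sp_a_ba φ hinj hh h)

lemma sm_aba {a b : G} (h : SM φ a b) : φ (a*b*a) = φ a * φ b * φ a := by
  obtain ⟨hab, hne⟩ := h
  rcases hh (a*b) a with e | e
  · exfalso
    have h2 : φ (a*(a*b)) = φ (a*b) * φ a := (sm_a_ab φ hh ⟨hab, hne⟩).1
    rw [← h2] at e
    have := hinj e
    have hcomm : b*a = a*b := mul_left_cancel (show a*(b*a) = a*(a*b) by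
      rw [← mul_assoc]; exact this)
    exact sc_ne_comm φ hh hne hcomm.symm
  · rw [e, hab]; group

lemma sm_a_ba {a b : G} (h : SM φ a b) : SM φ a (b*a) := by
  have hsw := sm_swap φ hinj hh h
  constructor
  · rw [← mul_assoc, sm_aba φ hinj hh h, hsw.1]
  · rw [hsw.1]
    intro e
    exact h.2 (grw (φ a)⁻¹ 1 e (by group) (by group))

lemma sm_ba_a {a b : G} (h : SM φ a b) : SM φ (b*a) a :=
  sm_swap φ hinj hh (sm_a_ba φ hinj hh h)

end strict

section claim4
include hinj hh

omit hinj in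
lemma xstar {a X c' : G} (hX : φ (X*a) = φ X * φ a) (hc' : φ (a*c') = φ c' * φ a)
    (hne' : φ a * φ c' ≠ φ c' * φ a) :
    φ X * φ c' = φ c' * φ X ∨ φ X * φ a * φ c' = φ c' * φ a * φ X ∨
      φ X * φ a = φ a * φ X := by
  have e1 := hh (X*a) c'
  rw [hX] at e1
  have e2 := hh X (a*c')
  rw [hc'] at e2
  have hA : X*a*c' = X*(a*c') := by group
  rw [hA] at e1
  rcases e1 with e1 | e1 <;> rcases e2 with e2 | e2
  · exact absurd (grw (φ X)⁻¹ 1 (e1.symm.trans e2) (by group) (by group)) hne'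
  · right; left; exact grw 1 1 (e1.symm.trans e2) (by group) (by group)
  · left; exact (grw 1 (φ a)⁻¹ (e1.symm.trans e2) (by group) (by group)).symm
  · right; right; exact grw (φ c')⁻¹ 1 (e1.symm.trans e2) (by group) (by group)

lemma claim4 {a b c : G} (hP : SP φ a b) (hM : SM φ a c) : False := by
  obtain ⟨hab, hne1⟩ := hP
  obtain ⟨hac, hne2⟩ := hM
  have hba : φ (b*a) = φ b * φ a := (sp_swap φ hinj hh ⟨hab, hne1⟩).1
  have habA : φ ((a*b)*a) = φ (a*b) * φ a := (sp_swap φ hinj hh (sp_a_ab φ hh ⟨hab, hne1⟩)).1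
  have hbaA : φ ((b*a)*a) = φ (b*a) * φ a := (sp_ba_a φ hinj hh ⟨hab, hne1⟩).1
  have hca : φ (c*a) = φ a * φ c := (sm_swap φ hinj hh ⟨hac, hne2⟩).1
  have hMaac := sm_a_ab φ hh ⟨hac, hne2⟩
  have hMaca := sm_a_ba φ hinj hh ⟨hac, hne2⟩
  -- S1 : X = b, c' = c
  have S1 := xstar φ hh hba hac hne2
  rcases S1 with hI | hII | h3
  · -- Case I : φb φc = φc φb
    -- S2 : X = a*b, c' = c
    have S2 := xstar φ hh habA hac hne2
    rw [hab] at S2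
    rcases S2 with d1 | d2 | d3
    · -- (A*B)*C = C*(A*B) with hI ⇒ A*C = C*A : contra hne2
      have e'' : φ a * (φ c * φ b) = φ c * (φ a * φ b) := by
        rw [← hI]
        exact grw 1 1 d1 (by group) (by group)
      exact hne2 (grw 1 (φ b)⁻¹ e'' (by group) (by group))
    · -- (†) : A*B*A*C = C*A*(A*B)
      -- S3 : X = a*b, c' = a*c
      have S3 := xstar φ hh habA hMaac.1 hMaac.2
      rw [hab, hac] at S3
      rcases S3 with r1 | r2 | r3
      · -- (A*B)*(C*A) = (C*A)*(A*B)
        have q1 : φ a * φ b * (φ c * φ a) = φ c * φ a * (φ a * φ b) :=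
          grw 1 1 r1 (by group) (by group)
        have q2 : φ a * φ b * (φ c * φ a) = φ a * φ b * φ a * φ c :=
          q1.trans (grw 1 1 d2.symm (by group) (by group))
        exact hne2 ((grw (φ a * φ b)⁻¹ 1 q2 (by group) (by group)).symm)
      · -- (A*B)*A*(C*A) = (C*A)*A*(A*B)
        have e2 : φ a * φ b * φ a * φ c * φ a = φ c * φ a * φ a * (φ a * φ b) :=
          grw 1 1 r2 (by group) (by group)
        have d2' : φ a * φ b * φ a * φ c = φ c * φ a * (φ a * φ b) :=
          grw 1 1 d2 (by group) (by group)
        rw [d2'] at e2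
        -- C*A*(A*B)*A = C*A*A*(A*B)
        exact hne1 (grw (φ c * φ a * φ a)⁻¹ 1 e2.symm (by group) (by group))
      · exact hne1 (grw (φ a)⁻¹ 1 r3 (by group) (by group)).symm
    · exact hne1 (grw (φ a)⁻¹ 1 d3 (by group) (by group)).symm
  · -- Case II : B*A*C = C*A*B
    -- S4 : X = b, c' = c*a
    have S4 := xstar φ hh hba hMaca.1 hMaca.2
    rw [hca] at S4
    rcases S4 with t1 | s2 | t3
    · -- B*(A*C) = (A*C)*B
      have t' : φ b * φ a * φ c = φ a * φ c * φ b := grw 1 1 t1 (by group) (by group)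
      have X := hII.symm.trans t'
      exact hne2 ((grw 1 (φ b)⁻¹ X (by group) (by group)).symm)
    · -- (‡) : B*A*(A*C) = (A*C)*A*B
      have s2' : φ b * φ a * φ a * φ c = φ a * φ c * φ a * φ b :=
        grw 1 1 s2 (by group) (by group)
      -- S5 : X = b*a, c' = c
      have S5 := xstar φ hh hbaA hac hne2
      rw [hba] at S5
      rcases S5 with u1 | u2 | u3
      · have u1' : φ b * φ a * φ c = φ c * (φ b * φ a) := grw 1 1 u1 (by group) (by group)
        have X := hII.symm.trans u1'
        exact hne1 (grw (φ c)⁻¹ 1 X (by group) (by group))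
      · have eu : φ b * φ a * φ a * φ c = φ c * φ a * φ b * φ a :=
          grw 1 1 u2 (by group) (by group)
        have ew : φ a * φ c * φ a * φ b = φ c * φ a * φ b * φ a := s2'.symm.trans eu
        rw [← hII] at ew
        -- ew : A*C*A*B = B*A*C*A
        have := s2'.trans ew
        -- B*A*A*C = B*A*C*A
        exact hne2 (grw (φ b * φ a)⁻¹ 1 this (by group) (by group))
      · exact hne1 (grw 1 (φ a)⁻¹ u3 (by group) (by group)).symm
    · exact hne1 t3.symm
  · exact hne1 h3.symm

lemma claim4R {a b c : G} (hP : SP φ a b) (hM : SM φ c b) : False :=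
  claim4 φ hinj hh (sp_inv φ hh hP) (sm_inv φ hh hM)

lemma claim4M1 {a b c : G} (hP : SP φ a b) (hM : SM φ b c) : False :=
  claim4R φ hinj hh hP (sm_swap φ hinj hh hM)

lemma claim4M2 {a b c : G} (hP : SP φ a b) (hM : SM φ c a) : False :=
  claim4 φ hinj hh hP (sm_swap φ hinj hh hM)

theorem scott_dichotomy :
    (∀ x y, φ (x*y) = φ x * φ y) ∨ (∀ x y, φ (x*y) = φ y * φ x) := by
  by_contra hcon
  push_neg at hcon
  obtain ⟨h1, h2⟩ := hcon
  obtain ⟨c, d, hcd⟩ := h1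
  obtain ⟨a, b, hab⟩ := h2
  have hMcd : SM φ c d := by
    rcases hh c d with h | h
    · exact absurd h hcd
    · exact ⟨h, fun e => hcd (h.trans e.symm)⟩
  have hPab : SP φ a b := by
    rcases hh a b with h | h
    · exact ⟨h, fun e => hab (h.trans e)⟩
    · exact absurd h hab
  clear hab hcd
  obtain ⟨hab, hne1⟩ := hPab
  obtain ⟨hcd, hne3⟩ := hMcd
  -- cross commutations
  have hac : φ a * φ c = φ c * φ a := by
    by_contra hx
    rcases hh a c with h | h
    · exact claim4M1 φ hinj hh ⟨h, hx⟩ ⟨hcd, hne3⟩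
    · exact claim4 φ hinj hh ⟨hab, hne1⟩ ⟨h, hx⟩
  have hbc : φ b * φ c = φ c * φ b := by
    by_contra hx
    rcases hh b c with h | h
    · exact claim4M1 φ hinj hh ⟨h, hx⟩ ⟨hcd, hne3⟩
    · exact claim4M1 φ hinj hh ⟨hab, hne1⟩ ⟨h, hx⟩
  have hbd : φ b * φ d = φ d * φ b := by
    by_contra hx
    rcases hh b d with h | h
    · exact claim4R φ hinj hh ⟨h, hx⟩ ⟨hcd, hne3⟩
    · exact claim4M1 φ hinj hh ⟨hab, hne1⟩ ⟨h, hx⟩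
  have hvbc : φ (b*c) = φ b * φ c := by
    rcases hh b c with h | h
    · exact h
    · exact h.trans hbc.symm
  -- SP a (b*c)
  have hval : φ (a*(b*c)) = φ a * φ b * φ c := by
    have e1 := hh (a*b) c
    rw [hab] at e1
    have hA : (a*b)*c = a*(b*c) := by group
    rw [hA] at e1
    rcases e1 with e1 | e1
    · exact e1
    · rw [e1, ← mul_assoc, ← hac, mul_assoc, ← hbc, ← mul_assoc]
  have SPabc : SP φ a (b*c) := by
    rw [SP, hvbc]
    constructor
    · rw [hval]; group
    · intro e
      have e' : φ a * (φ b * φ c) = φ b * φ a * φ c := by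
        rw [e, mul_assoc, ← hac, ← mul_assoc]
      exact hne1 (grw 1 (φ c)⁻¹ e' (by group) (by group))
  have SMbcd : SM φ (b*c) d := by
    rw [SM, hvbc]
    have e1 := hh (b*c) d
    rw [hvbc] at e1
    constructor
    · rcases e1 with e1 | e1
      · exfalso
        have e2 := hh b (c*d)
        rw [hcd] at e2
        have hA : (b*c)*d = b*(c*d) := by group
        rw [hA] at e1
        rcases e2 with e2 | e2
        · exact hne3 (grw (φ b)⁻¹ 1 (e1.symm.trans e2) (by group) (by group))
        · have e' : φ b * φ c * φ d = φ b * (φ d * φ c) := by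
            rw [e1.symm.trans e2, mul_assoc (φ d) (φ c) (φ b), ← hbc,
              ← mul_assoc (φ d) (φ b) (φ c), ← hbd, mul_assoc (φ b) (φ d) (φ c)]
          exact hne3 (grw (φ b)⁻¹ 1 e' (by group) (by group))
      · exact e1
    · intro e
      have e' : φ b * (φ c * φ d) = φ b * (φ d * φ c) := by
        rw [← mul_assoc, e, ← mul_assoc, ← hbd, mul_assoc]
      exact hne3 (mul_left_cancel e')
  exact claim4M1 φ hinj hh SPabc SMbcd

end claim4
end Scott

section MainAbstract
variable {G : Type*} [Group G] (φ σ : G → G) (c : G)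
  (hφ : ∀ g h, φ (g*h) = φ g * φ h)
  (hφinj : Function.Injective φ)
  (C2 : ∀ g h, σ (h*g) = σ h * φ g ∨ σ (h*g) = σ h * (φ g)⁻¹)
  (C3 : ∀ g h, φ (h⁻¹*g) = (σ h)⁻¹ * σ g ∨ φ (h⁻¹*g) = (σ g)⁻¹ * σ h)
  (hc : σ 1 = c)

include hφ
lemma ma_one : φ 1 = 1 := by
  have := hφ 1 1
  rw [one_mul] at this
  exact (grw (φ 1)⁻¹ 1 this (by group) (by group)).symm

lemma ma_inv (g : G) : φ g⁻¹ = (φ g)⁻¹ := by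
  have h := hφ g⁻¹ g
  rw [inv_mul_cancel, ma_one φ hφ] at h
  exact (grw 1 (φ g)⁻¹ h (by group) (by group)).symm

include hφinj
lemma ma_sq (g : G) : φ g * φ g = 1 ↔ g*g = 1 := by
  constructor
  · intro h
    apply hφinj
    rw [hφ, ma_one φ hφ, h]
  · intro h
    rw [← hφ, h, ma_one φ hφ]

include C2 hc
omit hφ hφinj in
lemma ma_cover (g : G) : σ g = c * φ g ∨ σ g = c * (φ g)⁻¹ := by
  have := C2 g 1
  rw [one_mul, hc] at this
  exact this

lemma ma_sigma_inv (i : G) (hi : i*i = 1) : σ i = c * φ i := by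
  rcases ma_cover φ σ c C2 hc i with h | h
  · exact h
  · rw [h]
    have : (φ i)⁻¹ = φ i := inv_eq_of_mul_eq_one_right ((ma_sq φ hφ hφinj i).2 hi)
    rw [this]

include C3

/-- F1 : elements of M' invert elements of P'. -/
lemma ma_F1 (g h : G) (nig : ¬ g*g = 1) (nih : ¬ h*h = 1)
    (hPg : σ g = c * φ g) (hMh : σ h = c * (φ h)⁻¹) : h*g*h⁻¹ = g⁻¹ := by
  have lhs : φ (h⁻¹*g) = (φ h)⁻¹ * φ g := by rw [hφ, ma_inv φ hφ]
  rcases C3 g h with e | e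
  · rw [hPg, hMh, ← lhs.symm] at e
    -- (φh)⁻¹ φg = (c (φh)⁻¹)⁻¹ (c φg)  ⇒ φh*φh = 1
    exfalso
    exact nih ((ma_sq φ hφ hφinj h).1 (grw (φ h) (φ g)⁻¹ e.symm (by group) (by group)))
  · rw [hPg, hMh, ← lhs.symm] at e
    have e'' : (φ h)⁻¹ * φ g = (φ g)⁻¹ * (φ h)⁻¹ := grw 1 1 e (by group) (by group)
    have e2 := congrArg (fun x => x⁻¹) e''
    simp only [mul_inv_rev, inv_inv] at e2
    -- e2 : (φ g)⁻¹ * φ h = φ h * φ g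
    have key : φ h * φ g * (φ h)⁻¹ = (φ g)⁻¹ := grw 1 (φ h)⁻¹ e2.symm (by group) (by group)
    apply hφinj
    rw [hφ, hφ, ma_inv φ hφ, ma_inv φ hφ, key]

/-- F2 : two elements of M' commute or have equal squares. -/
lemma ma_F2 (g h : G) (hMg : σ g = c * (φ g)⁻¹) (hMh : σ h = c * (φ h)⁻¹) :
    g*h = h*g ∨ g*g = h*h := by
  have lhs : φ (h⁻¹*g) = (φ h)⁻¹ * φ g := by rw [hφ, ma_inv φ hφ]
  rcases C3 g h with e | e
  · rw [hMg, hMh, ← lhs.symm] at e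
    right
    apply hφinj
    rw [hφ, hφ]
    have e'' : (φ h)⁻¹ * φ g = φ h * (φ g)⁻¹ := grw 1 1 e (by group) (by group)
    exact grw (φ h) (φ g) e'' (by group) (by group)
  · rw [hMg, hMh, ← lhs.symm] at e
    left
    have e'' : (φ h)⁻¹ * φ g = φ g * (φ h)⁻¹ := grw 1 1 e (by group) (by group)
    have : h⁻¹ * g = g * h⁻¹ := by
      apply hφinj
      rw [hφ, hφ, ma_inv φ hφ, e'']
    exact grw h h this (by group) (by group)

/-- F4 : involutions commute with M' elements. -/
lemma ma_F4 (i h : G) (hi : i*i = 1) (nih : ¬ h*h = 1)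
    (hMh : σ h = c * (φ h)⁻¹) : i*h = h*i := by
  have hσi := ma_sigma_inv φ σ c hφ hφinj C2 hc i hi
  have hinvi : (φ i)⁻¹ = φ i := inv_eq_of_mul_eq_one_right ((ma_sq φ hφ hφinj i).2 hi)
  have lhs : φ (i⁻¹*h) = (φ i)⁻¹ * φ h := by rw [hφ, ma_inv φ hφ]
  rcases C3 h i with e | e
  · rw [hσi, hMh, ← lhs.symm] at e
    exfalso
    apply nih
    apply (ma_sq φ hφ hφinj h).1
    have e'' : (φ i)⁻¹ * φ h = (φ i)⁻¹ * (φ h)⁻¹ := grw 1 1 e (by group) (by group)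
    exact grw (φ i) (φ h) e'' (by group) (by group)
  · rw [hσi, hMh, ← lhs.symm] at e
    have e'' : (φ i)⁻¹ * φ h = φ h * φ i := grw 1 1 e (by group) (by group)
    rw [hinvi] at e''
    apply hφinj
    rw [hφ, hφ, e'']


/-- Inversion case: involutions are central. -/
lemma ma_invA (hIall : ∀ g, ¬(g*g=1) → σ g = c*(φ g)⁻¹) (x : G) (hx2 : x*x = 1) :
    ∀ y, x*y = y*x := by
  intro y
  have hxinv : (φ x)⁻¹ = φ x := inv_eq_of_mul_eq_one_right ((ma_sq φ hφ hφinj x).2 hx2)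
  have hxinvG : x⁻¹ = x := inv_eq_of_mul_eq_one_right hx2
  have hσx := ma_sigma_inv φ σ c hφ hφinj C2 hc x hx2
  by_cases hy2 : y*y = 1
  · suffices hxy2 : (x*y)*(x*y) = 1 by
      have h1 : x*y = (x*y)⁻¹ := (inv_eq_of_mul_eq_one_right hxy2).symm
      rw [h1, mul_inv_rev, hxinvG, inv_eq_of_mul_eq_one_right hy2]
    by_contra hni
    have e := C2 y x
    rw [hσx, hIall (x*y) hni] at e
    have hyinv : (φ y)⁻¹ = φ y := inv_eq_of_mul_eq_one_right ((ma_sq φ hφ hφinj y).2 hy2)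
    rw [hyinv] at e
    apply hni
    have e' : c * (φ (x*y))⁻¹ = c * φ x * φ y := by rcases e with e | e <;> exact e
    have e2 : (φ (x*y))⁻¹ = φ x * φ y := grw c⁻¹ 1 e' (by group) (by group)
    have e3 : φ ((x*y)⁻¹) = φ (x*y) := by rw [ma_inv φ hφ, e2, hφ]
    have e4 := hφinj e3
    nth_rewrite 1 [← e4]
    exact inv_mul_cancel (x*y)
  · by_cases hyx2 : (y*x)*(y*x) = 1
    · exfalso
      have e := C2 x y
      rw [hIall y hy2, ma_sigma_inv φ σ c hφ hφinj C2 hc (y*x) hyx2, hxinv] at e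
      have e' : c * φ (y*x) = c * (φ y)⁻¹ * φ x := by rcases e with e | e <;> exact e
      apply hy2
      apply (ma_sq φ hφ hφinj y).1
      have e2 : c * (φ y * φ x) = c * (φ y)⁻¹ * φ x := by rw [← hφ y x]; exact e'
      exact grw (φ y * c⁻¹) (φ x)⁻¹ e2 (by group) (by group)
    · have e := C2 x y
      rw [hIall y hy2, hIall (y*x) hyx2, hxinv] at e
      have e' : c * (φ (y*x))⁻¹ = c * (φ y)⁻¹ * φ x := by rcases e with e | e <;> exact e
      rw [hφ y x] at e'
      have e3 : φ ((y*x)⁻¹) = φ (y⁻¹*x) := by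
        rw [ma_inv φ hφ (y*x), hφ y x, hφ y⁻¹ x, ma_inv φ hφ y]
        exact grw c⁻¹ 1 e' (by group) (by group)
      have e4 : x⁻¹*y⁻¹ = y⁻¹*x := by rw [← mul_inv_rev]; exact hφinj e3
      rw [hxinvG] at e4
      exact (grw y y e4 (by group) (by group)).symm

/-- Inversion case: noncommuting pairs invert each other. -/
lemma ma_invB (hIall : ∀ g, ¬(g*g=1) → σ g = c*(φ g)⁻¹) (x y : G)
    (hx2 : ¬ x*x = 1) (hy2 : ¬ y*y = 1) (hne : x*y ≠ y*x) : y*x*y⁻¹ = x⁻¹ := by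
  by_cases hyx2 : (y*x)*(y*x) = 1
  · exfalso
    have e := C2 x y
    rw [hIall y hy2, ma_sigma_inv φ σ c hφ hφinj C2 hc (y*x) hyx2] at e
    rcases e with e | e
    · apply hy2
      apply (ma_sq φ hφ hφinj y).1
      have e2 : c * (φ y * φ x) = c * (φ y)⁻¹ * φ x := by rw [← hφ y x]; exact e
      exact grw (φ y * c⁻¹) (φ x)⁻¹ e2 (by group) (by group)
    · rw [hφ y x] at e
      have e3 : φ (y*x) = φ (y⁻¹*x⁻¹) := by
        rw [hφ y x, hφ y⁻¹ x⁻¹, ma_inv φ hφ y, ma_inv φ hφ x]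
        exact grw c⁻¹ 1 e (by group) (by group)
      have h1 := hφinj e3
      have hxyx : x*y*x = y⁻¹ := grw y⁻¹ 1 hyx2 (by group) (by group)
      apply hne
      calc x*y = (x*y*x)*x⁻¹ := by group
        _ = y⁻¹*x⁻¹ := by rw [hxyx]
        _ = y*x := h1.symm
  · have e := C2 x y
    rw [hIall y hy2, hIall (y*x) hyx2] at e
    rcases e with e | e
    · rw [hφ y x] at e
      have e3 : φ ((y*x)⁻¹) = φ (y⁻¹*x) := by
        rw [ma_inv φ hφ (y*x), hφ y x, hφ y⁻¹ x, ma_inv φ hφ y]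
        exact grw c⁻¹ 1 e (by group) (by group)
      have e4 : x⁻¹*y⁻¹ = y⁻¹*x := by rw [← mul_inv_rev]; exact hφinj e3
      have t : y*x⁻¹*y⁻¹ = x := grw y 1 e4 (by group) (by group)
      have t2 := congrArg (fun z => z⁻¹) t
      simp only [mul_inv_rev, inv_inv] at t2
      rw [← mul_assoc] at t2
      exact t2
    · exfalso; apply hne
      rw [hφ y x] at e
      have e3 : φ ((y*x)⁻¹) = φ (y⁻¹*x⁻¹) := by
        rw [ma_inv φ hφ (y*x), hφ y x, hφ y⁻¹ x⁻¹, ma_inv φ hφ y, ma_inv φ hφ x]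
        exact grw c⁻¹ 1 e (by group) (by group)
      have e4 : x⁻¹*y⁻¹ = y⁻¹*x⁻¹ := by rw [← mul_inv_rev]; exact hφinj e3
      have t2 := congrArg (fun z => z⁻¹) e4
      simp only [mul_inv_rev, inv_inv] at t2
      exact t2.symm

/-- Main abstract center theorem. -/
lemma ma_center (hnab : ∃ a b : G, a*b ≠ b*a) (hnothom : ∃ g, ¬ σ g = c * φ g) :
    (∃ z : G, z ≠ 1 ∧ ∀ x, z*x = x*z) ∧ (∀ z : G, (∀ x, z*x = x*z) → z*z = 1) := by
  obtain ⟨g₁, hg₁⟩ := hnothom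
  have hMg₁ : σ g₁ = c * (φ g₁)⁻¹ := (ma_cover φ σ c C2 hc g₁).resolve_left hg₁
  have nig₁ : ¬ g₁*g₁ = 1 := fun h => hg₁ (ma_sigma_inv φ σ c hφ hφinj C2 hc g₁ h)
  by_cases hPex : ∃ g, ¬(g*g = 1) ∧ σ g = c * φ g
  · -- MIXED case
    obtain ⟨g₀, nig₀, hPg₀⟩ := hPex
    constructor
    · refine ⟨g₁*g₁, nig₁, ?_⟩
      intro k
      by_cases hk2 : k*k = 1
      · have hkg := ma_F4 φ σ c hφ hφinj C2 C3 hc k g₁ hk2 nig₁ hMg₁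
        rw [mul_assoc, ← hkg, ← mul_assoc, ← hkg, mul_assoc]
      · rcases ma_cover φ σ c C2 hc k with hPk | hMk
        · have hk := ma_F1 φ σ c hφ hφinj C2 C3 hc k g₁ hk2 nig₁ hPk hMg₁
          have h1 : g₁*k = k⁻¹*g₁ := grw 1 g₁ hk (by group) (by group)
          have h2 : k*g₁ = g₁*k⁻¹ := grw k k⁻¹ h1 (by group) (by group)
          rw [mul_assoc, h1, ← mul_assoc, ← h2, mul_assoc]
        · rcases ma_F2 φ σ c hφ hφinj C2 C3 hc k g₁ hMk hMg₁ with hkg | heq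
          · rw [mul_assoc, ← hkg, ← mul_assoc, ← hkg, mul_assoc]
          · rw [← heq, mul_assoc]
    · intro z' hz'c
      by_contra hz2
      rcases ma_cover φ σ c C2 hc z' with hPz | hMz
      · have hF := ma_F1 φ σ c hφ hφinj C2 C3 hc z' g₁ hz2 nig₁ hPz hMg₁
        rw [← hz'c g₁, mul_assoc, mul_inv_cancel, mul_one] at hF
        apply hz2
        nth_rewrite 1 [hF]
        exact inv_mul_cancel z'
      · have hF := ma_F1 φ σ c hφ hφinj C2 C3 hc g₀ z' nig₀ hz2 hPg₀ hMz
        rw [hz'c g₀, mul_assoc, mul_inv_cancel, mul_one] at hF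
        apply nig₀
        nth_rewrite 2 [hF]
        exact mul_inv_cancel g₀
  · -- INVERSION case
    push_neg at hPex
    have hIall : ∀ g, ¬(g*g = 1) → σ g = c * (φ g)⁻¹ := fun g hg =>
      (ma_cover φ σ c C2 hc g).resolve_left (hPex g hg)
    obtain ⟨x, y, hxy⟩ := hnab
    have hx2 : ¬ x*x = 1 := fun h =>
      hxy (ma_invA φ σ c hφ hφinj C2 C3 hc hIall x h y)
    have hy2 : ¬ y*y = 1 := fun h =>
      hxy (ma_invA φ σ c hφ hφinj C2 C3 hc hIall y h x).symm
    have hBxy := ma_invB φ σ c hφ hφinj C2 C3 hc hIall x y hx2 hy2 hxy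
    have hByx := ma_invB φ σ c hφ hφinj C2 C3 hc hIall y x hy2 hx2 (fun e => hxy e.symm)
    constructor
    · have hx4 : (x*x)*(x*x) = 1 := by
        by_contra hni
        by_cases hcw : (x*x)*y = y*(x*x)
        · have e1 : y*(x*x)*y⁻¹ = (y*x*y⁻¹)*(y*x*y⁻¹) := by group
          rw [hBxy, ← hcw] at e1
          have e2 : x*x = x⁻¹*x⁻¹ := grw 1 1 e1 (by group) (by group)
          apply hni
          nth_rewrite 2 [e2]
          group
        · have e2 := ma_invB φ σ c hφ hφinj C2 C3 hc hIall y (x*x) hy2 hni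
            (fun e => hcw e.symm)
          have e3 : (x*x)*y*(x*x)⁻¹ = x*(x*y*x⁻¹)*x⁻¹ := by group
          rw [hByx] at e3
          have e4 : x*y⁻¹*x⁻¹ = (x*y*x⁻¹)⁻¹ := by group
          rw [hByx, inv_inv] at e4
          have e5 := e2.symm.trans (e3.trans e4)
          apply hy2
          nth_rewrite 1 [← e5]
          exact inv_mul_cancel y
      exact ⟨x*x, hx2, fun w => ma_invA φ σ c hφ hφinj C2 C3 hc hIall (x*x) hx4 w⟩
    · intro z' hz'c
      by_contra hz2
      have hzinv : ∀ w, z'⁻¹*w = w*z'⁻¹ := fun w =>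
        grw z'⁻¹ z'⁻¹ (hz'c w).symm (by group) (by group)
      have hxzni : ¬ ((x*z')*(x*z') = 1) := by
        intro h
        have hc1 := ma_invA φ σ c hφ hφinj C2 C3 hc hIall (x*z') h y
        apply hxy
        have l1 : (x*z')*y = (x*y)*z' := by rw [mul_assoc, hz'c y, ← mul_assoc]
        have l2 : y*(x*z') = (y*x)*z' := by rw [← mul_assoc]
        exact mul_right_cancel (l1.symm.trans (hc1.trans l2))
      have hxzy : (x*z')*y ≠ y*(x*z') := by
        intro e
        apply hxy
        have l1 : (x*z')*y = (x*y)*z' := by rw [mul_assoc, hz'c y, ← mul_assoc]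
        have l2 : y*(x*z') = (y*x)*z' := by rw [← mul_assoc]
        exact mul_right_cancel (l1.symm.trans (e.trans l2))
      have hB2 := ma_invB φ σ c hφ hφinj C2 C3 hc hIall (x*z') y hxzni hy2 hxzy
      have l3 : y*(x*z')*y⁻¹ = (y*x*y⁻¹)*z' := by
        rw [show y*(x*z')*y⁻¹ = y*x*(z'*y⁻¹) from by group, hz'c y⁻¹, ← mul_assoc]
      rw [l3, hBxy] at hB2
      have hB3 : x⁻¹*z' = x⁻¹*z'⁻¹ := by rw [hB2, mul_inv_rev, hzinv x⁻¹]
      have hzz := mul_left_cancel hB3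
      apply hz2
      nth_rewrite 1 [hzz]
      exact inv_mul_cancel z'

end MainAbstract

section Chein
variable {G : Type*} [Group G]

@[simp] lemma cmul_ff (g h : G) : cmul (g,false) (h,false) = (g*h, false) := rfl
@[simp] lemma cmul_ft (g h : G) : cmul (g,false) (h,true) = (h*g, true) := rfl
@[simp] lemma cmul_tf (g h : G) : cmul (g,true) (h,false) = (g*h⁻¹, true) := rfl
@[simp] lemma cmul_tt (g h : G) : cmul (g,true) (h,true) = (h⁻¹*g, false) := rfl

lemma cmul_snd (x y : G × Bool) : (cmul x y).2 = xor x.2 y.2 := by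
  rcases x with ⟨g, _|_⟩ <;> rcases y with ⟨h, _|_⟩ <;> rfl

/-- The inversion map, an anti-automorphism of the Chein loop. -/
def Jmap : G × Bool → G × Bool := fun x =>
  match x with
  | (g, false) => (g⁻¹, false)
  | (g, true) => (g, true)

@[simp] lemma Jmap_f (g : G) : Jmap (g, false) = (g⁻¹, false) := rfl
@[simp] lemma Jmap_t (g : G) : Jmap (g, true) = (g, true) := rfl

lemma Jmap_snd (x : G × Bool) : (Jmap x).2 = x.2 := by
  rcases x with ⟨g, _|_⟩ <;> rfl

lemma Jmap_anti (x y : G × Bool) : Jmap (cmul x y) = cmul (Jmap y) (Jmap x) := by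
  rcases x with ⟨g, _|_⟩ <;> rcases y with ⟨h, _|_⟩ <;> simp <;> group

lemma Jmap_Jmap (x : G × Bool) : Jmap (Jmap x) = x := by
  rcases x with ⟨g, _|_⟩ <;> simp

lemma Jmap_bij : Function.Bijective (Jmap (G := G)) :=
  Function.bijective_iff_has_inverse.2 ⟨Jmap, Jmap_Jmap, Jmap_Jmap⟩

variable (f : G × Bool → G × Bool)

lemma f_parity (hf : ∀ x y, f (cmul x y) = cmul (f x) (f y) ∨ f (cmul x y) = cmul (f y) (f x))
    (x y : G × Bool) : (f (cmul x y)).2 = xor (f x).2 (f y).2 := by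
  rcases hf x y with h | h <;> rw [h, cmul_snd]
  exact Bool.xor_comm _ _

/-- Main case: `f` preserves the group part, and the restriction to `G` is a
homomorphism. -/
lemma main_case_homo (hbij : Function.Bijective f)
    (hf : ∀ x y, f (cmul x y) = cmul (f x) (f y) ∨ f (cmul x y) = cmul (f y) (f x))
    (hna : ¬ ∀ x y, f (cmul x y) = cmul (f x) (f y))
    (hnab : ∃ a b : G, a*b ≠ b*a)
    (hp : ∀ g : G, (f (g, false)).2 = false)
    (hhom : ∀ g h : G, (f (g*h, false)).1 = (f (g,false)).1 * (f (h,false)).1) :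
    (∃ z : G, z ≠ 1 ∧ ∀ x, z*x = x*z) ∧ (∀ z : G, (∀ x, z*x = x*z) → z*z = 1) := by
  set φ : G → G := fun g => (f (g, false)).1 with hφdef
  set σ : G → G := fun g => (f (g, true)).1 with hσdef
  have hφmul : ∀ g h : G, φ (g*h) = φ g * φ h := hhom
  have hfF : ∀ g : G, f (g, false) = (φ g, false) := by
    intro g
    exact Prod.ext rfl (hp g)
  have htau : (f ((1:G), true)).2 = true := by
    by_contra ht
    have ht' : (f ((1:G),true)).2 = false := by simpa using ht
    obtain ⟨x, hx⟩ := hbij.2 ((1:G), true)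
    rcases x with ⟨g, _ | _⟩
    · have := congrArg Prod.snd hx
      rw [hp g] at this
      simp at this
    · have hgt : ((g:G), true) = cmul (g, false) ((1:G), true) := by
        rw [cmul_ft, one_mul]
      have hpar := f_parity f hf (g, false) ((1:G), true)
      rw [← hgt, hp g, ht'] at hpar
      have := congrArg Prod.snd hx
      rw [hpar] at this
      simp at this
  have hsnd : ∀ g : G, (f (g, true)).2 = true := by
    intro g
    have hgt : ((g:G), true) = cmul (g, false) ((1:G), true) := by
      rw [cmul_ft, one_mul]
    have hpar := f_parity f hf (g, false) ((1:G), true)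
    rw [← hgt, hp g, htau] at hpar
    exact hpar
  have hfT : ∀ g : G, f (g, true) = (σ g, true) := by
    intro g
    exact Prod.ext rfl (hsnd g)
  have hφinj : Function.Injective φ := by
    intro g h hgh
    have : f (g, false) = f (h, false) := by rw [hfF g, hfF h, hgh]
    have := hbij.1 this
    exact (Prod.ext_iff.1 this).1
  have C2 : ∀ g h : G, σ (h*g) = σ h * φ g ∨ σ (h*g) = σ h * (φ g)⁻¹ := by
    intro g h
    have h2 := hf (g, false) (h, true)
    rw [cmul_ft, hfF g, hfT h, hfT (h*g), cmul_ft, cmul_tf] at h2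
    rcases h2 with h2 | h2
    · left; exact (Prod.ext_iff.1 h2).1
    · right; exact (Prod.ext_iff.1 h2).1
  have C3 : ∀ g h : G, φ (h⁻¹*g) = (σ h)⁻¹ * σ g ∨ φ (h⁻¹*g) = (σ g)⁻¹ * σ h := by
    intro g h
    have h2 := hf (g, true) (h, true)
    rw [cmul_tt, hfF (h⁻¹*g), hfT g, hfT h, cmul_tt, cmul_tt] at h2
    rcases h2 with h2 | h2
    · left; exact (Prod.ext_iff.1 h2).1
    · right; exact (Prod.ext_iff.1 h2).1
  by_cases hall : ∀ g, σ g = σ 1 * φ g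
  · exfalso
    apply hna
    rintro ⟨g, _ | _⟩ ⟨h, _ | _⟩
    · rw [cmul_ff, hfF g, hfF h, hfF (g*h), cmul_ff, Prod.mk.injEq]
      exact ⟨hhom g h, rfl⟩
    · rw [cmul_ft, hfF g, hfT h, hfT (h*g), cmul_ft, Prod.mk.injEq]
      refine ⟨?_, rfl⟩
      rw [hall (h*g), hall h, hφmul h g]
      group
    · rw [cmul_tf, hfT g, hfF h, hfT (g*h⁻¹), cmul_tf, Prod.mk.injEq]
      refine ⟨?_, rfl⟩
      rw [hall (g*h⁻¹), hall g, hφmul g h⁻¹, ma_inv φ hφmul h]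
      group
    · rw [cmul_tt, hfT g, hfT h, hfF (h⁻¹*g), cmul_tt, Prod.mk.injEq]
      refine ⟨?_, rfl⟩
      rw [hall g, hall h, hφmul h⁻¹ g, ma_inv φ hφmul h]
      group
  · push_neg at hall
    exact ma_center φ σ (σ 1) hφmul hφinj C2 C3 rfl hnab hall

lemma main_case (hbij : Function.Bijective f)
    (hf : ∀ x y, f (cmul x y) = cmul (f x) (f y) ∨ f (cmul x y) = cmul (f y) (f x))
    (hna : ¬ ∀ x y, f (cmul x y) = cmul (f x) (f y))
    (hnanti : ¬ ∀ x y, f (cmul x y) = cmul (f y) (f x))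
    (hnab : ∃ a b : G, a*b ≠ b*a)
    (hp : ∀ g : G, (f (g, false)).2 = false) :
    (∃ z : G, z ≠ 1 ∧ ∀ x, z*x = x*z) ∧ (∀ z : G, (∀ x, z*x = x*z) → z*z = 1) := by
  have hφinj : Function.Injective (fun g : G => (f (g, false)).1) := by
    intro g h hgh
    have h1 : f (g, false) = f (h, false) := by
      refine Prod.ext hgh ?_
      rw [hp g, hp h]
    have := hbij.1 h1
    exact (Prod.ext_iff.1 this).1
  have hφhalf : ∀ g h : G, (f (g*h, false)).1 = (f (g,false)).1 * (f (h,false)).1 ∨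
      (f (g*h, false)).1 = (f (h,false)).1 * (f (g,false)).1 := by
    intro g h
    have h2 := hf (g, false) (h, false)
    rw [cmul_ff] at h2
    have hfFg : f (g, false) = ((f (g,false)).1, false) := Prod.ext rfl (hp g)
    have hfFh : f (h, false) = ((f (h,false)).1, false) := Prod.ext rfl (hp h)
    have hfFgh : f (g*h, false) = ((f (g*h,false)).1, false) := Prod.ext rfl (hp (g*h))
    rw [hfFg, hfFh, hfFgh, cmul_ff, cmul_ff] at h2
    rcases h2 with h2 | h2
    · left; exact (Prod.ext_iff.1 h2).1
    · right; exact (Prod.ext_iff.1 h2).1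
  rcases scott_dichotomy (fun g : G => (f (g, false)).1) hφinj hφhalf with hhom | hanti
  · exact main_case_homo f hbij hf hna hnab hp hhom
  · -- compose with the antiautomorphism J
    have hbij' : Function.Bijective (Jmap ∘ f) := Jmap_bij.comp hbij
    have hf' : ∀ x y, (Jmap ∘ f) (cmul x y) = cmul ((Jmap ∘ f) x) ((Jmap ∘ f) y) ∨
        (Jmap ∘ f) (cmul x y) = cmul ((Jmap ∘ f) y) ((Jmap ∘ f) x) := by
      intro x y
      rcases hf x y with h | h
      · right
        show Jmap (f (cmul x y)) = _
        rw [h, Jmap_anti]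
        rfl
      · left
        show Jmap (f (cmul x y)) = _
        rw [h, Jmap_anti]
        rfl
    have hna' : ¬ ∀ x y, (Jmap ∘ f) (cmul x y) = cmul ((Jmap ∘ f) x) ((Jmap ∘ f) y) := by
      intro hcon
      apply hnanti
      intro x y
      have h0 := hcon x y
      simp only [Function.comp_apply] at h0
      have h2 := congrArg Jmap h0
      rw [Jmap_Jmap, Jmap_anti, Jmap_Jmap, Jmap_Jmap] at h2
      exact h2
    have hp' : ∀ g : G, ((Jmap ∘ f) (g, false)).2 = false := by
      intro g
      show (Jmap (f (g, false))).2 = false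
      rw [Jmap_snd]
      exact hp g
    have hhom' : ∀ g h : G, ((Jmap ∘ f) (g*h, false)).1 =
        ((Jmap ∘ f) (g,false)).1 * ((Jmap ∘ f) (h,false)).1 := by
      intro g h
      show (Jmap (f (g*h, false))).1 = (Jmap (f (g, false))).1 * (Jmap (f (h, false))).1
      have e1 : f (g*h, false) = ((f (g*h,false)).1, false) := Prod.ext rfl (hp (g*h))
      have e2 : f (g, false) = ((f (g,false)).1, false) := Prod.ext rfl (hp g)
      have e3 : f (h, false) = ((f (h,false)).1, false) := Prod.ext rfl (hp h)
      rw [e1, e2, e3, Jmap_f, Jmap_f, Jmap_f, hanti g h, mul_inv_rev]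
    exact main_case_homo (Jmap ∘ f) hbij' hf' hna' hnab hp' hhom'

end Chein

section Dih
variable {G : Type*} [Group G]

/-- Embedding of the dihedral subgroup into the Chein loop, `τ = 0` case. -/
def kap0 (f : G × Bool → G × Bool) (g₀ : G) (g : G) : G × Bool :=
  if (f (g, false)).2 = false then (g, false) else (g * g₀, true)

variable (f : G × Bool → G × Bool)

lemma f_one (hf : ∀ x y, f (cmul x y) = cmul (f x) (f y) ∨ f (cmul x y) = cmul (f y) (f x)) :
    f ((1:G), false) = (1, false) := by
  have h := hf ((1:G), false) ((1:G), false)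
  rw [cmul_ff, mul_one] at h
  have h2 : f ((1:G), false) = cmul (f (1, false)) (f (1, false)) := by
    rcases h with h | h <;> exact h
  rcases hE : f ((1:G), false) with ⟨a, _ | _⟩
  · rw [hE, cmul_ff] at h2
    have := (Prod.ext_iff.1 h2).1
    rw [(right_eq_mul).1 this]
  · rw [hE, cmul_tt, inv_mul_cancel] at h2
    have := (Prod.ext_iff.1 h2).2
    simp at this

section DihCore
variable (hbij : Function.Bijective f)
  (hf : ∀ x y, f (cmul x y) = cmul (f x) (f y) ∨ f (cmul x y) = cmul (f y) (f x))
  (g₀ : G) (hg₀ : (f (g₀, false)).2 = true)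

include hf

lemma pmul (g h : G) : (f (g*h, false)).2 = xor (f (g,false)).2 (f (h,false)).2 := by
  have := f_parity f hf (g, false) (h, false)
  rw [cmul_ff] at this
  exact this

lemma p_one : (f ((1:G), false)).2 = false := by rw [f_one f hf]

lemma p_inv (g : G) : (f (g⁻¹, false)).2 = (f (g, false)).2 := by
  have := pmul f hf g⁻¹ g
  rw [inv_mul_cancel, p_one f hf] at this
  cases hb : (f (g, false)).2 <;> cases hb' : (f (g⁻¹, false)).2 <;>
    rw [hb, hb'] at this <;> first | rfl | simp at this

include hbij

lemma hBinv (b : G) (hb : (f (b, false)).2 = true) : b*b = 1 := by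
  have h2 := hf (b, false) (b, false)
  rw [cmul_ff] at h2
  have h3 : f (b*b, false) = cmul (f (b, false)) (f (b, false)) := by
    rcases h2 with h | h <;> exact h
  have hfb : f (b, false) = ((f (b, false)).1, true) := Prod.ext rfl hb
  rw [hfb, cmul_tt, inv_mul_cancel, ← f_one f hf] at h3
  have := hbij.1 h3
  exact (Prod.ext_iff.1 this).1

include hg₀

lemma hrefl (a b : G) (ha : (f (a, false)).2 = false) (hb : (f (b, false)).2 = true) :
    b*a*b = a⁻¹ := by
  have hab : (f (a*b, false)).2 = true := by rw [pmul f hf, ha, hb]; rfl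
  have h1 := hBinv f hbij hf (a*b) hab
  exact grw a⁻¹ 1 h1 (by group) (by group)

lemma habA (a a' : G) (ha : (f (a, false)).2 = false) (ha' : (f (a', false)).2 = false) :
    a*a' = a'*a := by
  have haa' : (f (a*a', false)).2 = false := by rw [pmul f hf, ha, ha']; rfl
  have h1 := hrefl f hbij hf g₀ hg₀ (a*a') g₀ haa' hg₀
  have h2 := hrefl f hbij hf g₀ hg₀ a g₀ ha hg₀
  have h3 := hrefl f hbij hf g₀ hg₀ a' g₀ ha' hg₀
  have hsq := hBinv f hbij hf g₀ hg₀
  have e : (g₀*a*g₀)*(g₀*a'*g₀) = g₀*(a*a')*g₀ := by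
    rw [show (g₀*a*g₀)*(g₀*a'*g₀) = g₀*a*(g₀*g₀)*(a'*g₀) from by group, hsq]
    group
  rw [h1, h2, h3] at e
  have := congrArg (fun w => w⁻¹) e
  simp only [mul_inv_rev, inv_inv] at this
  exact this.symm

lemma com1 (a b : G) (ha : (f (a, false)).2 = false) (hb : (f (b, false)).2 = true) :
    b*a = a⁻¹*b := by
  have h1 := hrefl f hbij hf g₀ hg₀ a b ha hb
  have hsq := hBinv f hbij hf b hb
  have e2 : (b*a*b)*b = a⁻¹*b := by rw [h1]
  have e3 : (b*a*b)*b = b*a := by rw [mul_assoc (b*a) b b, hsq, mul_one]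
  exact e3.symm.trans e2

lemma com2 (a b : G) (ha : (f (a, false)).2 = false) (hb : (f (b, false)).2 = true) :
    a*b = b*a⁻¹ := by
  have h1 := hrefl f hbij hf g₀ hg₀ a b ha hb
  have hsq := hBinv f hbij hf b hb
  have e2 : b*(b*a*b) = b*a⁻¹ := by rw [h1]
  have e3 : b*(b*a*b) = a*b := by rw [show b*(b*a*b) = (b*b)*(a*b) from by group, hsq, one_mul]
  exact e3.symm.trans e2

end DihCore
end Dih

section DihTau0
variable {G : Type*} [Group G] (f : G × Bool → G × Bool)
  (hbij : Function.Bijective f)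
  (hf : ∀ x y, f (cmul x y) = cmul (f x) (f y) ∨ f (cmul x y) = cmul (f y) (f x))
  (g₀ : G) (hg₀ : (f (g₀, false)).2 = true)

include hbij hf hg₀

lemma dih_tau0 (hna : ¬ ∀ x y, f (cmul x y) = cmul (f x) (f y))
    (hA1 : ∀ a : G, (f (a,false)).2 = false → a*a = 1 → a = 1)
    (hτ : (f ((1:G), true)).2 = false)
    (hθ : ∀ g h : G, (f (kap0 f g₀ (g*h))).1 =
      (f (kap0 f g₀ g)).1 * (f (kap0 f g₀ h)).1) : False := by
  set θ : G → G := fun g => (f (kap0 f g₀ g)).1 with hθdef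
  have hθm : ∀ g h : G, θ (g*h) = θ g * θ h := hθ
  have hsq : ∀ b : G, (f (b,false)).2 = true → b*b = 1 := hBinv f hbij hf
  have hg₀sq : g₀*g₀ = 1 := hBinv f hbij hf g₀ hg₀
  have hbinv : ∀ b : G, (f (b,false)).2 = true → b⁻¹ = b :=
    fun b hb => inv_eq_of_mul_eq_one_right (hsq b hb)
  have pm : ∀ g h : G, (f (g*h, false)).2 = xor (f (g,false)).2 (f (h,false)).2 := pmul f hf
  have hβ1 : ∀ x : G, (f (x, true)).2 = (f (x, false)).2 := by
    intro x
    have hpar := f_parity f hf (x, false) ((1:G), true)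
    rw [cmul_ft, one_mul, hτ] at hpar
    rw [hpar]
    cases hb : (f (x,false)).2 <;> rfl
  have hκA : ∀ a : G, (f (a,false)).2 = false → kap0 f g₀ a = (a, false) :=
    fun a ha => if_pos ha
  have hκB : ∀ b : G, (f (b,false)).2 = true → kap0 f g₀ b = (b*g₀, true) :=
    fun b hb => if_neg (by rw [hb]; simp)
  have hθsnd : ∀ g : G, (f (kap0 f g₀ g)).2 = false := by
    intro g
    cases hb : (f (g, false)).2
    · rw [hκA g hb, hb]
    · rw [hκB g hb, hβ1, pm, hb, hg₀]
      rfl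
  have hfκ : ∀ g : G, f (kap0 f g₀ g) = (θ g, false) := fun g => Prod.ext rfl (hθsnd g)
  have hfA : ∀ a : G, (f (a,false)).2 = false → f (a, false) = (θ a, false) := by
    intro a ha
    rw [← hκA a ha]; exact hfκ a
  have hfAu : ∀ x : G, (f (x,false)).2 = false → f (x, true) = (θ (x*g₀), false) := by
    intro x hx
    have h1 : kap0 f g₀ (x*g₀) = (x, true) := by
      rw [hκB (x*g₀) (by rw [pm, hx, hg₀]; rfl), mul_assoc, hg₀sq, mul_one]
    rw [← h1]; exact hfκ (x*g₀)
  have hfB : ∀ b : G, (f (b,false)).2 = true → f (b, false) = ((f (b,false)).1, true) :=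
    fun b hb => Prod.ext rfl hb
  have hfBu : ∀ b : G, (f (b,false)).2 = true → f (b, true) = ((f (b,true)).1, true) :=
    fun b hb => Prod.ext rfl (by rw [hβ1, hb])
  have hθinj : Function.Injective θ := by
    intro g h hgh
    have h1 : f (kap0 f g₀ g) = f (kap0 f g₀ h) := by rw [hfκ, hfκ, hgh]
    have h2 := hbij.1 h1
    cases hgb : (f (g,false)).2 <;> cases hhb : (f (h,false)).2
    · rw [hκA g hgb, hκA h hhb] at h2; exact (Prod.ext_iff.1 h2).1
    · rw [hκA g hgb, hκB h hhb] at h2; exact absurd (Prod.ext_iff.1 h2).2 (by simp)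
    · rw [hκB g hgb, hκA h hhb] at h2; exact absurd (Prod.ext_iff.1 h2).2 (by simp)
    · rw [hκB g hgb, hκB h hhb] at h2
      exact mul_right_cancel (Prod.ext_iff.1 h2).1
  have θ1 : θ 1 = 1 := ma_one θ hθm
  have θinv : ∀ x : G, θ x⁻¹ = (θ x)⁻¹ := ma_inv θ hθm
  have θsq : ∀ x : G, θ x * θ x = 1 ↔ x*x = 1 := ma_sq θ hθm hθinj
  have θinvol : ∀ b : G, (f (b,false)).2 = true → (θ b)⁻¹ = θ b :=
    fun b hb => inv_eq_of_mul_eq_one_right ((θsq b).2 (hsq b hb))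
  -- pinned relations
  have rel2 : ∀ x b : G, (f (x,false)).2 = false → (f (b,false)).2 = true →
      (f (b*x, false)).1 = (f (b,true)).1 * θ (x*g₀) := by
    intro x b hx hb
    have h2 := hf (x, true) (b, true)
    rw [cmul_tt, hbinv b hb] at h2
    rw [hfAu x hx, hfBu b hb] at h2
    have hbx : (f (b*x, false)).2 = true := by rw [pm, hb, hx]; rfl
    rw [hfB (b*x) hbx] at h2
    rw [cmul_ft, cmul_tf] at h2
    have hxg : (f (x*g₀,false)).2 = true := by rw [pm, hx, hg₀]; rfl
    rw [θinvol (x*g₀) hxg] at h2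
    rcases h2 with h2 | h2 <;> exact (Prod.ext_iff.1 h2).1
  have rel1 : ∀ x b : G, (f (x,false)).2 = false → (f (b,false)).2 = true →
      (f (x*b, true)).1 = (f (b,false)).1 * θ (x*g₀) := by
    intro x b hx hb
    have h2 := hf (b, false) (x, true)
    rw [cmul_ft] at h2
    rw [hfB b hb, hfAu x hx] at h2
    have hxb : (f (x*b, false)).2 = true := by rw [pm, hx, hb]; rfl
    rw [hfBu (x*b) hxb] at h2
    rw [cmul_tf, cmul_ft] at h2
    have hxg : (f (x*g₀,false)).2 = true := by rw [pm, hx, hg₀]; rfl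
    rw [θinvol (x*g₀) hxg] at h2
    rcases h2 with h2 | h2 <;> exact (Prod.ext_iff.1 h2).1
  have relT : ∀ b : G, (f (b,false)).2 = true → (f (b,true)).1 = (f (b,false)).1 * θ g₀ := by
    intro b hb
    have := rel1 1 b (p_one f hf) hb
    rw [one_mul, one_mul] at this
    exact this
  have relS : ∀ b x : G, (f (b,false)).2 = true → (f (x,false)).2 = false →
      (f (b*x, false)).1 = (f (b,false)).1 * (θ x)⁻¹ := by
    intro b x hb hx
    rw [rel2 x b hx hb, relT b hb]
    rw [mul_assoc, ← hθm g₀ (x*g₀)]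
    rw [show g₀*(x*g₀) = g₀*x*g₀ from by group,
      hrefl f hbij hf g₀ hg₀ x g₀ hx hg₀, θinv]
  have relBB : ∀ g h : G, (f (g,false)).2 = true → (f (h,false)).2 = true →
      ((f (h,false)).1)⁻¹ * (f (g,false)).1 = θ (g*h) := by
    intro g h hg hh
    have hgh : (f (g*h, false)).2 = false := by rw [pm, hg, hh]; rfl
    have e := relS g (g*h) hg hgh
    rw [show g*(g*h) = h from by rw [← mul_assoc, hsq g hg, one_mul]] at e
    have e2 := congrArg (fun w => w⁻¹) e
    simp only [mul_inv_rev, inv_inv] at e2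
    rw [e2, mul_assoc, inv_mul_cancel, mul_one]
  -- abbreviations for the group facts
  have hAB := habA f hbij hf g₀ hg₀
  have hC1 := com1 f hbij hf g₀ hg₀
  have hC2 := com2 f hbij hf g₀ hg₀
  have hR := hrefl f hbij hf g₀ hg₀
  -- f is a homomorphism everywhere : contradiction
  apply hna
  rintro ⟨g, _ | _⟩ ⟨h, _ | _⟩
  · -- (g,0)*(h,0) = (g*h, 0)
    rw [cmul_ff]
    cases hg : (f (g,false)).2 <;> cases hh : (f (h,false)).2
    · have hgh : (f (g*h, false)).2 = false := by rw [pm, hg, hh]; rfl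
      rw [hfA g hg, hfA h hh, hfA (g*h) hgh, cmul_ff]
      exact Prod.ext (hθ g h) rfl
    · have hgh : (f (g*h,false)).2 = true := by rw [pm, hg, hh]; rfl
      rw [hfA g hg, hfB h hh, hfB (g*h) hgh, cmul_ft]
      rw [Prod.mk.injEq]
      refine ⟨?_, rfl⟩
      rw [hC2 g h hg hh, relS h g⁻¹ hh (by rw [p_inv f hf]; exact hg), θinv, inv_inv]
    · have hgh : (f (g*h,false)).2 = true := by rw [pm, hg, hh]; rfl
      rw [hfB g hg, hfA h hh, hfB (g*h) hgh, cmul_tf]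
      rw [Prod.mk.injEq]
      refine ⟨?_, rfl⟩
      exact relS g h hg hh
    · have hgh : (f (g*h,false)).2 = false := by rw [pm, hg, hh]; rfl
      rw [hfB g hg, hfB h hh, hfA (g*h) hgh, cmul_tt]
      exact Prod.ext (relBB g h hg hh).symm rfl
  · -- (g,0)*(h,1) = (h*g, 1)
    rw [cmul_ft]
    cases hg : (f (g,false)).2 <;> cases hh : (f (h,false)).2
    · have hhg : (f (h*g, false)).2 = false := by rw [pm, hh, hg]; rfl
      rw [hfA g hg, hfAu h hh, hfAu (h*g) hhg, cmul_ff]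
      rw [Prod.mk.injEq]
      refine ⟨?_, rfl⟩
      rw [← hθm g (h*g₀)]
      congr 1
      rw [← mul_assoc, hAB g h hg hh]
    · have hhg : (f (h*g, false)).2 = true := by rw [pm, hh, hg]; rfl
      rw [hfA g hg, hfBu h hh, hfBu (h*g) hhg, cmul_ft]
      rw [Prod.mk.injEq]
      refine ⟨?_, rfl⟩
      rw [relT (h*g) hhg, relS h g hh hg, relT h hh]
      rw [mul_assoc, mul_assoc, ← θinv g, ← hθm g⁻¹ g₀, ← hθm g₀ g]
      rw [(hC1 g g₀ hg hg₀).symm]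
    · have hhg : (f (h*g, false)).2 = true := by rw [pm, hh, hg]; rfl
      rw [hfB g hg, hfAu h hh, hfBu (h*g) hhg, cmul_tf]
      rw [Prod.mk.injEq]
      refine ⟨?_, rfl⟩
      have hpB : (f (h*g₀,false)).2 = true := by rw [pm, hh, hg₀]; rfl
      rw [θinvol (h*g₀) hpB, relT (h*g) hhg,
        show h*g = g*h⁻¹ from hC2 h g hh hg,
        relS g h⁻¹ hg (by rw [p_inv f hf]; exact hh), θinv, inv_inv,
        mul_assoc, hθm h g₀]
    · have hhg : (f (h*g, false)).2 = false := by rw [pm, hh, hg]; rfl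
      rw [hfB g hg, hfBu h hh, hfAu (h*g) hhg, cmul_tt]
      rw [Prod.mk.injEq]
      refine ⟨?_, rfl⟩
      rw [relT h hh]
      have e1 : ((f (h,false)).1 * θ g₀)⁻¹ * (f (g,false)).1
          = θ g₀ * (((f (h,false)).1)⁻¹ * (f (g,false)).1) := by
        rw [mul_inv_rev, θinvol g₀ hg₀]; group
      rw [e1, relBB g h hg hh, ← hθm g₀ (g*h)]
      congr 1
      have e2 : g₀*(g*h)*g₀ = h*g := by
        rw [hR (g*h) g₀ (by rw [pm, hg, hh]; rfl) hg₀, mul_inv_rev, hbinv g hg, hbinv h hh]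
      rw [← e2, mul_assoc (g₀*(g*h)) g₀ g₀, hg₀sq, mul_one]
  · -- (g,1)*(h,0) = (g*h⁻¹, 1)
    rw [cmul_tf]
    cases hg : (f (g,false)).2 <;> cases hh : (f (h,false)).2
    · have hgh : (f (g*h⁻¹, false)).2 = false := by rw [pm, hg, p_inv f hf, hh]; rfl
      rw [hfAu g hg, hfA h hh, hfAu (g*h⁻¹) hgh, cmul_ff]
      rw [Prod.mk.injEq]
      refine ⟨?_, rfl⟩
      rw [← hθm (g*g₀) h]
      congr 1
      rw [mul_assoc g h⁻¹ g₀, ← hC1 h g₀ hh hg₀, ← mul_assoc]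
    · have hgh : (f (g*h⁻¹, false)).2 = true := by rw [pm, hg, p_inv f hf, hh]; rfl
      rw [hbinv h hh] at hgh ⊢
      rw [hfAu g hg, hfB h hh, hfBu (g*h) hgh, cmul_ft]
      rw [Prod.mk.injEq]
      refine ⟨?_, rfl⟩
      rw [relT (g*h) hgh, show g*h = h*g⁻¹ from hC2 g h hg hh,
        relS h g⁻¹ hh (by rw [p_inv f hf]; exact hg), θinv, inv_inv,
        mul_assoc, hθm g g₀]
    · have hgh : (f (g*h⁻¹, false)).2 = true := by rw [pm, hg, p_inv f hf, hh]; rfl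
      rw [hfBu g hg, hfA h hh, hfBu (g*h⁻¹) hgh, cmul_tf]
      rw [Prod.mk.injEq]
      refine ⟨?_, rfl⟩
      rw [relT (g*h⁻¹) hgh, relS g h⁻¹ hg (by rw [p_inv f hf]; exact hh),
        relT g hg, θinv, inv_inv]
      rw [mul_assoc, mul_assoc, ← hθm h g₀, ← θinv h, ← hθm g₀ h⁻¹]
      rw [hC2 h g₀ hh hg₀]
    · have hgh : (f (g*h⁻¹, false)).2 = false := by rw [pm, hg, p_inv f hf, hh]; rfl
      rw [hbinv h hh] at hgh ⊢
      rw [hfBu g hg, hfB h hh, hfAu (g*h) hgh, cmul_tt]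
      rw [Prod.mk.injEq]
      refine ⟨?_, rfl⟩
      rw [relT g hg]
      have e1 : ((f (h,false)).1)⁻¹ * ((f (g,false)).1 * θ g₀)
          = (((f (h,false)).1)⁻¹ * (f (g,false)).1) * θ g₀ := by group
      rw [e1, relBB g h hg hh, hθm (g*h) g₀]
  · -- (g,1)*(h,1) = (h⁻¹*g, 0)
    rw [cmul_tt]
    cases hg : (f (g,false)).2 <;> cases hh : (f (h,false)).2
    · have hgh : (f (h⁻¹*g, false)).2 = false := by rw [pm, p_inv f hf, hh, hg]; rfl
      rw [hfAu g hg, hfAu h hh, hfA (h⁻¹*g) hgh, cmul_ff]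
      rw [Prod.mk.injEq]
      refine ⟨?_, rfl⟩
      rw [← hθm (g*g₀) (h*g₀)]
      congr 1
      have e1 : (g*g₀)*(h*g₀) = g*(g₀*h)*g₀ := by group
      rw [e1, hC1 h g₀ hh hg₀]
      rw [show g*(h⁻¹*g₀)*g₀ = g*h⁻¹*(g₀*g₀) from by group, hg₀sq, mul_one]
      exact hAB h⁻¹ g (by rw [p_inv f hf]; exact hh) hg
    · have hgh : (f (h⁻¹*g, false)).2 = true := by rw [pm, p_inv f hf, hh, hg]; rfl
      rw [hbinv h hh] at hgh ⊢
      rw [hfAu g hg, hfBu h hh, hfB (h*g) hgh, cmul_ft]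
      rw [Prod.mk.injEq]
      refine ⟨?_, rfl⟩
      rw [relS h g hh hg, relT h hh]
      rw [mul_assoc, ← hθm g₀ (g*g₀)]
      congr 1
      rw [show g₀*(g*g₀) = g₀*g*g₀ from by group, hR g g₀ hg hg₀, θinv]
    · have hgh : (f (h⁻¹*g, false)).2 = true := by rw [pm, p_inv f hf, hh, hg]; rfl
      rw [hfBu g hg, hfAu h hh, hfB (h⁻¹*g) hgh, cmul_tf]
      rw [Prod.mk.injEq]
      refine ⟨?_, rfl⟩
      have hpB : (f (h*g₀,false)).2 = true := by rw [pm, hh, hg₀]; rfl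
      rw [θinvol (h*g₀) hpB]
      rw [show h⁻¹*g = g*h from by rw [hC2 h⁻¹ g (by rw [p_inv f hf]; exact hh) hg, inv_inv]]
      rw [relS g h hg hh, relT g hg]
      rw [mul_assoc, ← hθm g₀ (h*g₀)]
      congr 1
      rw [show g₀*(h*g₀) = g₀*h*g₀ from by group, hR h g₀ hh hg₀, θinv]
    · have hgh : (f (h⁻¹*g, false)).2 = false := by rw [pm, p_inv f hf, hh, hg]; rfl
      rw [hbinv h hh] at hgh ⊢
      rw [hfBu g hg, hfBu h hh, hfA (h*g) hgh, cmul_tt]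
      rw [Prod.mk.injEq]
      refine ⟨?_, rfl⟩
      rw [relT g hg, relT h hh]
      have e1 : ((f (h,false)).1 * θ g₀)⁻¹ * ((f (g,false)).1 * θ g₀)
          = θ g₀ * ((((f (h,false)).1)⁻¹ * (f (g,false)).1) * θ g₀) := by
        rw [mul_inv_rev, θinvol g₀ hg₀]; group
      rw [e1, relBB g h hg hh, ← hθm (g*h) g₀, ← hθm g₀ ((g*h)*g₀)]
      congr 1
      have e2 : g₀*((g*h)*g₀) = (g*h)⁻¹ := by
        rw [← mul_assoc]; exact hR (g*h) g₀ (by rw [pm, hg, hh]; rfl) hg₀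
      rw [e2, mul_inv_rev, hbinv g hg, hbinv h hh]
  done

end DihTau0

/-- Embedding of the dihedral subgroup into the Chein loop, `τ = 1` case. -/
def kap1 {G : Type*} [Group G] (f : G × Bool → G × Bool) (g : G) : G × Bool :=
  if (f (g, false)).2 = false then (g⁻¹, false) else (g, true)

section DihTau1
variable {G : Type*} [Group G] (f : G × Bool → G × Bool)
  (hbij : Function.Bijective f)
  (hf : ∀ x y, f (cmul x y) = cmul (f x) (f y) ∨ f (cmul x y) = cmul (f y) (f x))
  (g₀ : G) (hg₀ : (f (g₀, false)).2 = true)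

include hbij hf hg₀

lemma dih_tau1 (hna : ¬ ∀ x y, f (cmul x y) = cmul (f x) (f y))
    (hA1 : ∀ a : G, (f (a,false)).2 = false → a*a = 1 → a = 1)
    (hτ : (f ((1:G), true)).2 = true)
    (hθ : ∀ g h : G, (f (kap1 f (g*h))).1 =
      (f (kap1 f g)).1 * (f (kap1 f h)).1) : False := by
  set θ : G → G := fun g => (f (kap1 f g)).1 with hθdef
  have hθm : ∀ g h : G, θ (g*h) = θ g * θ h := hθ
  have hsq : ∀ b : G, (f (b,false)).2 = true → b*b = 1 := hBinv f hbij hf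
  have hg₀sq : g₀*g₀ = 1 := hBinv f hbij hf g₀ hg₀
  have hbinv : ∀ b : G, (f (b,false)).2 = true → b⁻¹ = b :=
    fun b hb => inv_eq_of_mul_eq_one_right (hsq b hb)
  have pm : ∀ g h : G, (f (g*h, false)).2 = xor (f (g,false)).2 (f (h,false)).2 := pmul f hf
  have hβ1 : ∀ x : G, (f (x, true)).2 = !(f (x, false)).2 := by
    intro x
    have hpar := f_parity f hf (x, false) ((1:G), true)
    rw [cmul_ft, one_mul, hτ] at hpar
    rw [hpar]
    cases hb : (f (x,false)).2 <;> rfl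
  have hκA : ∀ a : G, (f (a,false)).2 = false → kap1 f a = (a⁻¹, false) :=
    fun a ha => if_pos ha
  have hκB : ∀ b : G, (f (b,false)).2 = true → kap1 f b = (b, true) :=
    fun b hb => if_neg (by rw [hb]; simp)
  have hθsnd : ∀ g : G, (f (kap1 f g)).2 = false := by
    intro g
    cases hb : (f (g, false)).2
    · rw [hκA g hb, p_inv f hf, hb]
    · rw [hκB g hb, hβ1, hb]
      rfl
  have hfκ : ∀ g : G, f (kap1 f g) = (θ g, false) := fun g => Prod.ext rfl (hθsnd g)
  have hfA : ∀ a : G, (f (a,false)).2 = false → f (a, false) = (θ a⁻¹, false) := by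
    intro a ha
    have h1 : kap1 f a⁻¹ = (a, false) := by
      rw [hκA a⁻¹ (by rw [p_inv f hf]; exact ha), inv_inv]
    rw [← h1]; exact hfκ a⁻¹
  have hfBu : ∀ b : G, (f (b,false)).2 = true → f (b, true) = (θ b, false) := by
    intro b hb
    rw [← hκB b hb]; exact hfκ b
  have hfB : ∀ b : G, (f (b,false)).2 = true → f (b, false) = ((f (b,false)).1, true) :=
    fun b hb => Prod.ext rfl hb
  have hfAu : ∀ a : G, (f (a,false)).2 = false → f (a, true) = ((f (a,true)).1, true) :=
    fun a ha => Prod.ext rfl (by rw [hβ1, ha]; rfl)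
  have hθinj : Function.Injective θ := by
    intro g h hgh
    have h1 : f (kap1 f g) = f (kap1 f h) := by rw [hfκ, hfκ, hgh]
    have h2 := hbij.1 h1
    cases hgb : (f (g,false)).2 <;> cases hhb : (f (h,false)).2
    · rw [hκA g hgb, hκA h hhb] at h2
      have := (Prod.ext_iff.1 h2).1
      exact inv_injective this
    · rw [hκA g hgb, hκB h hhb] at h2; exact absurd (Prod.ext_iff.1 h2).2 (by simp)
    · rw [hκB g hgb, hκA h hhb] at h2; exact absurd (Prod.ext_iff.1 h2).2 (by simp)
    · rw [hκB g hgb, hκB h hhb] at h2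
      exact (Prod.ext_iff.1 h2).1
  have θ1 : θ 1 = 1 := ma_one θ hθm
  have θinv : ∀ x : G, θ x⁻¹ = (θ x)⁻¹ := ma_inv θ hθm
  have θsq : ∀ x : G, θ x * θ x = 1 ↔ x*x = 1 := ma_sq θ hθm hθinj
  have θinvol : ∀ b : G, (f (b,false)).2 = true → (θ b)⁻¹ = θ b :=
    fun b hb => inv_eq_of_mul_eq_one_right ((θsq b).2 (hsq b hb))
  have θinv2 : ∀ x : G, (θ x⁻¹)⁻¹ = θ x := fun x => by rw [θinv, inv_inv]
  -- pinned relation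
  have relP1 : ∀ b b' : G, (f (b,false)).2 = true → (f (b',false)).2 = true →
      (f (b'*b, true)).1 = (f (b,false)).1 * θ b' := by
    intro b b' hb hb'
    have h2 := hf (b, false) (b', true)
    rw [cmul_ft] at h2
    rw [hfB b hb, hfBu b' hb'] at h2
    have hbb : (f (b'*b, false)).2 = false := by rw [pm, hb', hb]; rfl
    have hbb2 : (f (b'*b, true)).2 = true := by rw [hβ1, hbb]; rfl
    have hbb3 : f (b'*b, true) = ((f (b'*b, true)).1, true) := Prod.ext rfl hbb2
    rw [hbb3] at h2
    rw [cmul_tf, cmul_ft] at h2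
    rw [θinvol b' hb'] at h2
    rcases h2 with h2 | h2 <;> exact (Prod.ext_iff.1 h2).1
  have relSB : ∀ b : G, (f (b,false)).2 = true →
      (f (b,false)).1 = (f ((1:G),true)).1 * θ b := by
    intro b hb
    have h1 := relP1 b b hb hb
    rw [hsq b hb] at h1
    have h2 : (f (b,false)).1 = (f ((1:G),true)).1 * (θ b)⁻¹ :=
      grw 1 (θ b)⁻¹ h1.symm (by group) (by group)
    rw [θinvol b hb] at h2
    exact h2
  have relT : ∀ a : G, (f (a,false)).2 = false →
      (f (a,true)).1 = (f ((1:G),true)).1 * θ a⁻¹ := by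
    intro a ha
    have hag : (f (a*g₀, false)).2 = true := by rw [pm, ha, hg₀]; rfl
    have h1 := relP1 g₀ (a*g₀) hg₀ hag
    rw [mul_assoc, hg₀sq, mul_one] at h1
    rw [h1, relSB g₀ hg₀, mul_assoc, ← hθm g₀ (a*g₀),
      show g₀*(a*g₀) = g₀*a*g₀ from by group,
      hrefl f hbij hf g₀ hg₀ a g₀ ha hg₀]
  have hAB := habA f hbij hf g₀ hg₀
  have hC1 := com1 f hbij hf g₀ hg₀
  have hC2 := com2 f hbij hf g₀ hg₀
  have hR := hrefl f hbij hf g₀ hg₀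
  apply hna
  rintro ⟨g, _ | _⟩ ⟨h, _ | _⟩
  · rw [cmul_ff]
    cases hg : (f (g,false)).2 <;> cases hh : (f (h,false)).2
    · have hgh : (f (g*h, false)).2 = false := by rw [pm, hg, hh]; rfl
      rw [hfA g hg, hfA h hh, hfA (g*h) hgh, cmul_ff, Prod.mk.injEq]
      refine ⟨?_, rfl⟩
      rw [← hθm g⁻¹ h⁻¹]
      congr 1
      rw [mul_inv_rev, hAB h⁻¹ g⁻¹ (by rw [p_inv f hf]; exact hh)
        (by rw [p_inv f hf]; exact hg)]
    · have hgh : (f (g*h,false)).2 = true := by rw [pm, hg, hh]; rfl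
      rw [hfA g hg, hfB h hh, hfB (g*h) hgh, cmul_ft, Prod.mk.injEq]
      refine ⟨?_, rfl⟩
      rw [relSB (g*h) hgh, relSB h hh, mul_assoc, ← hθm h g⁻¹, hC2 g h hg hh]
    · have hgh : (f (g*h,false)).2 = true := by rw [pm, hg, hh]; rfl
      rw [hfB g hg, hfA h hh, hfB (g*h) hgh, cmul_tf, Prod.mk.injEq]
      refine ⟨?_, rfl⟩
      rw [θinv2 h, relSB (g*h) hgh, relSB g hg, mul_assoc, ← hθm g h]
    · have hgh : (f (g*h,false)).2 = false := by rw [pm, hg, hh]; rfl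
      rw [hfB g hg, hfB h hh, hfA (g*h) hgh, cmul_tt, Prod.mk.injEq]
      refine ⟨?_, rfl⟩
      rw [relSB g hg, relSB h hh]
      have e1 : ((f ((1:G),true)).1 * θ h)⁻¹ * ((f ((1:G),true)).1 * θ g)
          = (θ h)⁻¹ * θ g := by group
      rw [e1, θinvol h hh, ← hθm h g]
      congr 1
      rw [mul_inv_rev, hbinv g hg, hbinv h hh]
  · rw [cmul_ft]
    cases hg : (f (g,false)).2 <;> cases hh : (f (h,false)).2
    · have hhg : (f (h*g, false)).2 = false := by rw [pm, hh, hg]; rfl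
      rw [hfA g hg, hfAu h hh, hfAu (h*g) hhg, cmul_ft, Prod.mk.injEq]
      refine ⟨?_, rfl⟩
      rw [relT (h*g) hhg, relT h hh, mul_assoc, ← hθm h⁻¹ g⁻¹]
      congr 2
      rw [mul_inv_rev, hAB g⁻¹ h⁻¹ (by rw [p_inv f hf]; exact hg)
        (by rw [p_inv f hf]; exact hh)]
    · have hhg : (f (h*g, false)).2 = true := by rw [pm, hh, hg]; rfl
      rw [hfA g hg, hfBu h hh, hfBu (h*g) hhg, cmul_ff, Prod.mk.injEq]
      refine ⟨?_, rfl⟩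
      rw [← hθm g⁻¹ h]
      exact congrArg θ (hC1 g h hg hh)
    · have hhg : (f (h*g, false)).2 = true := by rw [pm, hh, hg]; rfl
      rw [hfB g hg, hfAu h hh, hfBu (h*g) hhg, cmul_tt, Prod.mk.injEq]
      refine ⟨?_, rfl⟩
      rw [relT h hh, relSB g hg]
      have e1 : ((f ((1:G),true)).1 * θ h⁻¹)⁻¹ * ((f ((1:G),true)).1 * θ g)
          = (θ h⁻¹)⁻¹ * θ g := by group
      rw [e1, θinv2 h, ← hθm h g]
    · have hhg : (f (h*g, false)).2 = false := by rw [pm, hh, hg]; rfl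
      rw [hfB g hg, hfBu h hh, hfAu (h*g) hhg, cmul_tf, Prod.mk.injEq]
      refine ⟨?_, rfl⟩
      rw [relT (h*g) hhg, relSB g hg, θinvol h hh, mul_assoc, ← hθm g h]
      congr 2
      rw [mul_inv_rev, hbinv g hg, hbinv h hh]
  · rw [cmul_tf]
    cases hg : (f (g,false)).2 <;> cases hh : (f (h,false)).2
    · have hgh : (f (g*h⁻¹, false)).2 = false := by rw [pm, hg, p_inv f hf, hh]; rfl
      rw [hfAu g hg, hfA h hh, hfAu (g*h⁻¹) hgh, cmul_tf, Prod.mk.injEq]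
      refine ⟨?_, rfl⟩
      rw [relT (g*h⁻¹) hgh, relT g hg, θinv2 h, mul_assoc, ← hθm g⁻¹ h]
      congr 2
      rw [mul_inv_rev, inv_inv, hAB h g⁻¹ hh (by rw [p_inv f hf]; exact hg)]
    · have hgh : (f (g*h⁻¹, false)).2 = true := by rw [pm, hg, p_inv f hf, hh]; rfl
      rw [hbinv h hh] at hgh ⊢
      rw [hfAu g hg, hfB h hh, hfBu (g*h) hgh, cmul_tt, Prod.mk.injEq]
      refine ⟨?_, rfl⟩
      rw [relT g hg, relSB h hh]
      have e1 : ((f ((1:G),true)).1 * θ h)⁻¹ * ((f ((1:G),true)).1 * θ g⁻¹)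
          = (θ h)⁻¹ * θ g⁻¹ := by group
      rw [e1, θinvol h hh, ← hθm h g⁻¹]
      exact congrArg θ (hC2 g h hg hh)
    · have hgh : (f (g*h⁻¹, false)).2 = true := by rw [pm, hg, p_inv f hf, hh]; rfl
      rw [hfBu g hg, hfA h hh, hfBu (g*h⁻¹) hgh, cmul_ff, Prod.mk.injEq]
      exact ⟨hθm g h⁻¹, rfl⟩
    · have hgh : (f (g*h⁻¹, false)).2 = false := by rw [pm, hg, p_inv f hf, hh]; rfl
      rw [hbinv h hh] at hgh ⊢
      rw [hfBu g hg, hfB h hh, hfAu (g*h) hgh, cmul_ft, Prod.mk.injEq]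
      refine ⟨?_, rfl⟩
      rw [relT (g*h) hgh, relSB h hh, mul_assoc, ← hθm h g]
      congr 2
      rw [mul_inv_rev, hbinv g hg, hbinv h hh]
  · rw [cmul_tt]
    cases hg : (f (g,false)).2 <;> cases hh : (f (h,false)).2
    · have hgh : (f (h⁻¹*g, false)).2 = false := by rw [pm, p_inv f hf, hh, hg]; rfl
      rw [hfAu g hg, hfAu h hh, hfA (h⁻¹*g) hgh, cmul_tt, Prod.mk.injEq]
      refine ⟨?_, rfl⟩
      rw [relT g hg, relT h hh]
      have e1 : ((f ((1:G),true)).1 * θ h⁻¹)⁻¹ * ((f ((1:G),true)).1 * θ g⁻¹)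
          = (θ h⁻¹)⁻¹ * θ g⁻¹ := by group
      rw [e1, θinv2 h, ← hθm h g⁻¹]
      congr 1
      rw [mul_inv_rev, inv_inv, hAB g⁻¹ h (by rw [p_inv f hf]; exact hg) hh]
    · have hgh : (f (h⁻¹*g, false)).2 = true := by rw [pm, p_inv f hf, hh, hg]; rfl
      rw [hbinv h hh] at hgh ⊢
      rw [hfAu g hg, hfBu h hh, hfB (h*g) hgh, cmul_tf, Prod.mk.injEq]
      refine ⟨?_, rfl⟩
      rw [relSB (h*g) hgh, relT g hg, θinvol h hh, mul_assoc, ← hθm g⁻¹ h]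
      congr 2
      exact hC1 g h hg hh
    · have hgh : (f (h⁻¹*g, false)).2 = true := by rw [pm, p_inv f hf, hh, hg]; rfl
      rw [hfBu g hg, hfAu h hh, hfB (h⁻¹*g) hgh, cmul_ft, Prod.mk.injEq]
      refine ⟨?_, rfl⟩
      rw [relSB (h⁻¹*g) hgh, relT h hh, mul_assoc, ← hθm h⁻¹ g]
    · have hgh : (f (h⁻¹*g, false)).2 = false := by rw [pm, p_inv f hf, hh, hg]; rfl
      rw [hbinv h hh] at hgh ⊢
      rw [hfBu g hg, hfBu h hh, hfA (h*g) hgh, cmul_ff, Prod.mk.injEq]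
      refine ⟨?_, rfl⟩
      rw [← hθm g h]
      congr 1
      rw [mul_inv_rev, hbinv g hg, hbinv h hh]
  done

end DihTau1

section Glue
variable {G : Type*} [Group G] (f : G × Bool → G × Bool)

lemma J_half (hf : ∀ x y, f (cmul x y) = cmul (f x) (f y) ∨ f (cmul x y) = cmul (f y) (f x)) :
    ∀ x y, (Jmap ∘ f) (cmul x y) = cmul ((Jmap ∘ f) x) ((Jmap ∘ f) y) ∨
      (Jmap ∘ f) (cmul x y) = cmul ((Jmap ∘ f) y) ((Jmap ∘ f) x) := by
  intro x y
  rcases hf x y with h | h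
  · right
    show Jmap (f (cmul x y)) = _
    rw [h, Jmap_anti]
    rfl
  · left
    show Jmap (f (cmul x y)) = _
    rw [h, Jmap_anti]
    rfl

lemma J_na (hnanti : ¬ ∀ x y, f (cmul x y) = cmul (f y) (f x)) :
    ¬ ∀ x y, (Jmap ∘ f) (cmul x y) = cmul ((Jmap ∘ f) x) ((Jmap ∘ f) y) := by
  intro hcon
  apply hnanti
  intro x y
  have h0 := hcon x y
  simp only [Function.comp_apply] at h0
  have h2 := congrArg Jmap h0
  rw [Jmap_Jmap, Jmap_anti, Jmap_Jmap, Jmap_Jmap] at h2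
  exact h2

lemma kap0_J (g₀ : G) : kap0 (Jmap ∘ f) g₀ = kap0 f g₀ := by
  funext g
  have hs : ((Jmap ∘ f) (g, false)).2 = (f (g, false)).2 := Jmap_snd _
  by_cases hc : (f (g,false)).2 = false
  · simp only [kap0, if_pos hc, if_pos (hs.trans hc)]
  · simp only [kap0, if_neg hc, if_neg (fun h => hc (hs.symm.trans h))]

lemma kap1_J : kap1 (Jmap ∘ f) = kap1 f := by
  funext g
  have hs : ((Jmap ∘ f) (g, false)).2 = (f (g, false)).2 := Jmap_snd _
  by_cases hc : (f (g,false)).2 = false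
  · simp only [kap1, if_pos hc, if_pos (hs.trans hc)]
  · simp only [kap1, if_neg hc, if_neg (fun h => hc (hs.symm.trans h))]

lemma dih_case (hbij : Function.Bijective f)
    (hf : ∀ x y, f (cmul x y) = cmul (f x) (f y) ∨ f (cmul x y) = cmul (f y) (f x))
    (hna : ¬ ∀ x y, f (cmul x y) = cmul (f x) (f y))
    (hnanti : ¬ ∀ x y, f (cmul x y) = cmul (f y) (f x))
    (hnab : ∃ a b : G, a*b ≠ b*a)
    (g₀ : G) (hg₀ : (f (g₀, false)).2 = true) :
    (∃ z : G, z ≠ 1 ∧ ∀ x, z*x = x*z) ∧ (∀ z : G, (∀ x, z*x = x*z) → z*z = 1) := by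
  have hsq := hBinv f hbij hf
  have hAB := habA f hbij hf g₀ hg₀
  have hR := hrefl f hbij hf g₀ hg₀
  have pm := pmul f hf
  have hg₀sq : g₀*g₀ = 1 := hsq g₀ hg₀
  by_cases hA1 : ∀ a : G, (f (a,false)).2 = false → a*a = 1 → a = 1
  · exfalso
    have hbij' : Function.Bijective (Jmap ∘ f) := Jmap_bij.comp hbij
    have hf' := J_half f hf
    have hna' := J_na f hnanti
    have hg₀' : ((Jmap ∘ f) (g₀, false)).2 = true := (Jmap_snd _).trans hg₀
    have hA1' : ∀ a : G, ((Jmap ∘ f) (a,false)).2 = false → a*a = 1 → a = 1 :=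
      fun a ha h2 => hA1 a ((Jmap_snd _).symm.trans ha) h2
    cases hτ : (f ((1:G), true)).2
    · -- τ = 0
      have hβ1 : ∀ x : G, (f (x, true)).2 = (f (x, false)).2 := by
        intro x
        have hpar := f_parity f hf (x, false) ((1:G), true)
        rw [cmul_ft, one_mul, hτ] at hpar
        rw [hpar]
        cases hb : (f (x,false)).2 <;> rfl
      have hκA : ∀ a : G, (f (a,false)).2 = false → kap0 f g₀ a = (a, false) :=
        fun a ha => if_pos ha
      have hκB : ∀ b : G, (f (b,false)).2 = true → kap0 f g₀ b = (b*g₀, true) :=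
        fun b hb => if_neg (by rw [hb]; simp)
      have hθsnd : ∀ g : G, (f (kap0 f g₀ g)).2 = false := by
        intro g
        cases hb : (f (g, false)).2
        · rw [hκA g hb, hb]
        · rw [hκB g hb, hβ1, pm, hb, hg₀]
          rfl
      have hfκ : ∀ g : G, f (kap0 f g₀ g) = ((f (kap0 f g₀ g)).1, false) :=
        fun g => Prod.ext rfl (hθsnd g)
      have hκmul : ∀ g h : G, kap0 f g₀ (g*h) = cmul (kap0 f g₀ g) (kap0 f g₀ h) := by
        intro g h
        cases hg : (f (g,false)).2 <;> cases hh : (f (h,false)).2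
        · have hgh : (f (g*h,false)).2 = false := by rw [pm, hg, hh]; rfl
          rw [hκA g hg, hκA h hh, hκA (g*h) hgh, cmul_ff]
        · have hgh : (f (g*h,false)).2 = true := by rw [pm, hg, hh]; rfl
          rw [hκA g hg, hκB h hh, hκB (g*h) hgh, cmul_ft, Prod.mk.injEq]
          refine ⟨?_, rfl⟩
          rw [mul_assoc, hAB g (h*g₀) hg (by rw [pm, hh, hg₀]; rfl)]
        · have hgh : (f (g*h,false)).2 = true := by rw [pm, hg, hh]; rfl
          rw [hκB g hg, hκA h hh, hκB (g*h) hgh, cmul_tf, Prod.mk.injEq]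
          refine ⟨?_, rfl⟩
          rw [mul_assoc g g₀ h⁻¹, com1 f hbij hf g₀ hg₀ h⁻¹ g₀
            (by rw [p_inv f hf]; exact hh) hg₀, inv_inv, mul_assoc g h g₀]
        · have hgh : (f (g*h,false)).2 = false := by rw [pm, hg, hh]; rfl
          rw [hκB g hg, hκB h hh, hκA (g*h) hgh, cmul_tt, Prod.mk.injEq]
          refine ⟨?_, rfl⟩
          have hhi : h⁻¹ = h := inv_eq_of_mul_eq_one_right (hsq h hh)
          have hgi : g⁻¹ = g := inv_eq_of_mul_eq_one_right (hsq g hg)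
          have hg₀i : g₀⁻¹ = g₀ := inv_eq_of_mul_eq_one_right hg₀sq
          have e1 : (h*g₀)⁻¹*(g*g₀) = g₀*(h*g)*g₀ := by
            rw [mul_inv_rev, hg₀i, hhi]; group
          rw [e1, hR (h*g) g₀ (by rw [pm, hh, hg]; rfl) hg₀, mul_inv_rev, hgi, hhi]
      have hθhalf : ∀ g h : G, (f (kap0 f g₀ (g*h))).1 =
          (f (kap0 f g₀ g)).1 * (f (kap0 f g₀ h)).1 ∨
          (f (kap0 f g₀ (g*h))).1 = (f (kap0 f g₀ h)).1 * (f (kap0 f g₀ g)).1 := by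
        intro g h
        have h2 := hf (kap0 f g₀ g) (kap0 f g₀ h)
        rw [← hκmul g h, hfκ g, hfκ h, hfκ (g*h), cmul_ff, cmul_ff] at h2
        rcases h2 with h2 | h2
        · left; exact (Prod.ext_iff.1 h2).1
        · right; exact (Prod.ext_iff.1 h2).1
      have hθinj : Function.Injective (fun g : G => (f (kap0 f g₀ g)).1) := by
        intro g h hgh
        simp only at hgh
        have h1 : f (kap0 f g₀ g) = f (kap0 f g₀ h) := by rw [hfκ g, hfκ h, hgh]
        have h2 := hbij.1 h1
        cases hgb : (f (g,false)).2 <;> cases hhb : (f (h,false)).2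
        · rw [hκA g hgb, hκA h hhb] at h2; exact (Prod.ext_iff.1 h2).1
        · rw [hκA g hgb, hκB h hhb] at h2; exact absurd (Prod.ext_iff.1 h2).2 (by simp)
        · rw [hκB g hgb, hκA h hhb] at h2; exact absurd (Prod.ext_iff.1 h2).2 (by simp)
        · rw [hκB g hgb, hκB h hhb] at h2
          exact mul_right_cancel (Prod.ext_iff.1 h2).1
      rcases scott_dichotomy (fun g : G => (f (kap0 f g₀ g)).1) hθinj hθhalf with hhom | hanti
      · exact dih_tau0 f hbij hf g₀ hg₀ hna hA1 hτ hhom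
      · have hτ' : ((Jmap ∘ f) ((1:G), true)).2 = false := (Jmap_snd _).trans hτ
        apply dih_tau0 (Jmap ∘ f) hbij' hf' g₀ hg₀' hna' hA1' hτ'
        intro g h
        rw [kap0_J f g₀]
        show (Jmap (f (kap0 f g₀ (g*h)))).1 =
          (Jmap (f (kap0 f g₀ g))).1 * (Jmap (f (kap0 f g₀ h))).1
        rw [hfκ (g*h), hfκ g, hfκ h, Jmap_f, Jmap_f, Jmap_f, hanti g h, mul_inv_rev]
    · -- τ = 1
      have hβ1 : ∀ x : G, (f (x, true)).2 = !(f (x, false)).2 := by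
        intro x
        have hpar := f_parity f hf (x, false) ((1:G), true)
        rw [cmul_ft, one_mul, hτ] at hpar
        rw [hpar]
        cases hb : (f (x,false)).2 <;> rfl
      have hκA : ∀ a : G, (f (a,false)).2 = false → kap1 f a = (a⁻¹, false) :=
        fun a ha => if_pos ha
      have hκB : ∀ b : G, (f (b,false)).2 = true → kap1 f b = (b, true) :=
        fun b hb => if_neg (by rw [hb]; simp)
      have hθsnd : ∀ g : G, (f (kap1 f g)).2 = false := by
        intro g
        cases hb : (f (g, false)).2
        · rw [hκA g hb, p_inv f hf, hb]
        · rw [hκB g hb, hβ1, hb]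
          rfl
      have hfκ : ∀ g : G, f (kap1 f g) = ((f (kap1 f g)).1, false) :=
        fun g => Prod.ext rfl (hθsnd g)
      have hκmul : ∀ g h : G, kap1 f (g*h) = cmul (kap1 f g) (kap1 f h) := by
        intro g h
        cases hg : (f (g,false)).2 <;> cases hh : (f (h,false)).2
        · have hgh : (f (g*h,false)).2 = false := by rw [pm, hg, hh]; rfl
          rw [hκA g hg, hκA h hh, hκA (g*h) hgh, cmul_ff, Prod.mk.injEq]
          refine ⟨?_, rfl⟩
          rw [mul_inv_rev, hAB h⁻¹ g⁻¹ (by rw [p_inv f hf]; exact hh)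
            (by rw [p_inv f hf]; exact hg)]
        · have hgh : (f (g*h,false)).2 = true := by rw [pm, hg, hh]; rfl
          rw [hκA g hg, hκB h hh, hκB (g*h) hgh, cmul_ft, Prod.mk.injEq]
          refine ⟨?_, rfl⟩
          exact com2 f hbij hf g₀ hg₀ g h hg hh
        · have hgh : (f (g*h,false)).2 = true := by rw [pm, hg, hh]; rfl
          rw [hκB g hg, hκA h hh, hκB (g*h) hgh, cmul_tf, Prod.mk.injEq]
          exact ⟨by rw [inv_inv], rfl⟩
        · have hgh : (f (g*h,false)).2 = false := by rw [pm, hg, hh]; rfl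
          rw [hκB g hg, hκB h hh, hκA (g*h) hgh, cmul_tt, Prod.mk.injEq]
          refine ⟨?_, rfl⟩
          rw [mul_inv_rev, inv_eq_of_mul_eq_one_right (hsq g hg)]
      have hθhalf : ∀ g h : G, (f (kap1 f (g*h))).1 =
          (f (kap1 f g)).1 * (f (kap1 f h)).1 ∨
          (f (kap1 f (g*h))).1 = (f (kap1 f h)).1 * (f (kap1 f g)).1 := by
        intro g h
        have h2 := hf (kap1 f g) (kap1 f h)
        rw [← hκmul g h, hfκ g, hfκ h, hfκ (g*h), cmul_ff, cmul_ff] at h2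
        rcases h2 with h2 | h2
        · left; exact (Prod.ext_iff.1 h2).1
        · right; exact (Prod.ext_iff.1 h2).1
      have hθinj : Function.Injective (fun g : G => (f (kap1 f g)).1) := by
        intro g h hgh
        simp only at hgh
        have h1 : f (kap1 f g) = f (kap1 f h) := by rw [hfκ g, hfκ h, hgh]
        have h2 := hbij.1 h1
        cases hgb : (f (g,false)).2 <;> cases hhb : (f (h,false)).2
        · rw [hκA g hgb, hκA h hhb] at h2
          exact inv_injective (Prod.ext_iff.1 h2).1
        · rw [hκA g hgb, hκB h hhb] at h2; exact absurd (Prod.ext_iff.1 h2).2 (by simp)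
        · rw [hκB g hgb, hκA h hhb] at h2; exact absurd (Prod.ext_iff.1 h2).2 (by simp)
        · rw [hκB g hgb, hκB h hhb] at h2
          exact (Prod.ext_iff.1 h2).1
      rcases scott_dichotomy (fun g : G => (f (kap1 f g)).1) hθinj hθhalf with hhom | hanti
      · exact dih_tau1 f hbij hf g₀ hg₀ hna hA1 hτ hhom
      · have hτ' : ((Jmap ∘ f) ((1:G), true)).2 = true := (Jmap_snd _).trans hτ
        apply dih_tau1 (Jmap ∘ f) hbij' hf' g₀ hg₀' hna' hA1' hτ'
        intro g h
        rw [kap1_J f]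
        show (Jmap (f (kap1 f (g*h)))).1 =
          (Jmap (f (kap1 f g))).1 * (Jmap (f (kap1 f h))).1
        rw [hfκ (g*h), hfκ g, hfκ h, Jmap_f, Jmap_f, Jmap_f, hanti g h, mul_inv_rev]
  · push_neg at hA1
    obtain ⟨a₀, hpa₀, ha₀sq, ha₀ne⟩ := hA1
    have ha₀i : a₀⁻¹ = a₀ := inv_eq_of_mul_eq_one_right ha₀sq
    constructor
    · refine ⟨a₀, ha₀ne, ?_⟩
      intro x
      cases hx : (f (x,false)).2
      · exact hAB a₀ x hpa₀ hx
      · have h1 := hR a₀ x hpa₀ hx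
        rw [ha₀i] at h1
        have hxx := hsq x hx
        have e2 : (x*a₀*x)*x = a₀*x := by rw [h1]
        have e3 : (x*a₀*x)*x = x*a₀ := by rw [mul_assoc (x*a₀) x x, hxx, mul_one]
        exact (e3.symm.trans e2).symm
    · intro z hzc
      cases hz : (f (z,false)).2
      · have h1 := hR z g₀ hz hg₀
        rw [← hzc g₀, mul_assoc, hg₀sq, mul_one] at h1
        nth_rewrite 1 [h1]
        exact inv_mul_cancel z
      · exfalso
        obtain ⟨u, v, huv⟩ := hnab
        apply huv
        have hzz := hsq z hz
        have hcomA : ∀ w : G, (f (w,false)).2 = true →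
            ∃ a, (f (a,false)).2 = false ∧ w = a*z := by
          intro w hw
          refine ⟨w*z, by rw [pm, hw, hz]; rfl, ?_⟩
          rw [mul_assoc, hzz, mul_one]
        cases hu : (f (u,false)).2 <;> cases hv : (f (v,false)).2
        · exact hAB u v hu hv
        · obtain ⟨a, hpa, hva⟩ := hcomA v hv
          rw [hva, ← mul_assoc, hAB u a hu hpa, mul_assoc, ← hzc u, ← mul_assoc]
        · obtain ⟨a, hpa, hua⟩ := hcomA u hu
          rw [hua, mul_assoc, hzc v, ← mul_assoc, hAB a v hpa hv, mul_assoc]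
        · obtain ⟨a, hpa, hua⟩ := hcomA u hu
          obtain ⟨a', hpa', hva⟩ := hcomA v hv
          have e1 : ∀ b b' : G, (b*z)*(b'*z) = (b*b')*(z*z) := by
            intro b b'
            rw [show (b*z)*(b'*z) = b*(z*b')*z from by group, hzc b',
              show b*(b'*z)*z = (b*b')*(z*z) from by group]
          rw [hua, hva, e1, e1, hAB a a' hpa hpa']

end Glue

lemma center_package {G : Type*} [Group G] [Finite G]
    (hnt : ∃ z : G, z ≠ 1 ∧ ∀ x, z * x = x * z)
    (hexp : ∀ z : G, (∀ x, z * x = x * z) → z * z = 1) :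
    ∃ m : ℕ, 1 ≤ m ∧
      Nonempty (Subgroup.center G ≃* (Fin m → Multiplicative (ZMod 2))) := by
  classical
  set Z := Subgroup.center G
  have hZnt : Nontrivial Z := by
    obtain ⟨z, hz1, hz⟩ := hnt
    refine ⟨⟨⟨z, ?_⟩, 1, ?_⟩⟩
    · rw [Subgroup.mem_center_iff]; intro g; rw [hz g]
    · simp [Subtype.ext_iff, hz1]
  have hZexp : ∀ x : Z, x * x = 1 := by
    intro ⟨x, hx⟩
    have := hexp x (fun g => (Subgroup.mem_center_iff.1 hx g).symm)
    exact Subtype.ext this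
  letI : AddCommGroup (Additive Z) := by open scoped IsMulCommutative in exact inferInstance
  have h2 : ∀ x : Additive Z, (2 : ℕ) • x = 0 := by
    intro x
    show (2:ℕ) • x = 0
    rw [two_nsmul]
    exact hZexp x.toMul  -- x + x = 0 in additive means x*x=1
  letI : Module (ZMod 2) (Additive Z) := AddCommGroup.zmodModule h2
  haveI : Finite (Additive Z) := inferInstanceAs (Finite Z)
  haveI : Module.Finite (ZMod 2) (Additive Z) := Module.Finite.of_finite
  let m := Module.finrank (ZMod 2) (Additive Z)
  have hm : 1 ≤ m := by
    haveI : Nontrivial (Additive Z) := inferInstanceAs (Nontrivial Z)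
    exact Module.finrank_pos
  let b := Module.finBasis (ZMod 2) (Additive Z)
  let e1 : Additive Z ≃ₗ[ZMod 2] (Fin m → ZMod 2) := b.equivFun
  let e2 : Multiplicative (Additive Z) ≃* Multiplicative (Fin m → ZMod 2) :=
    AddEquiv.toMultiplicative e1.toAddEquiv
  let e3 : Z ≃* Multiplicative (Fin m → ZMod 2) :=
    (MulEquiv.multiplicativeAdditive Z).symm.trans e2
  exact ⟨m, hm, ⟨e3.trans (MulEquiv.piMultiplicative _)⟩⟩


/-- If a finite nonabelian group `G` is such that `M(G,2)` has a nontrivial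
half-automorphism, then the center of `G` is isomorphic to `C₂^m` for some
`m ≥ 1`. -/
theorem center_elementary_abelian_two {G : Type*} [Group G] [Finite G]
    (hnab : ∃ a b : G, a * b ≠ b * a)
    (hhalf : ∃ f : G × Bool → G × Bool, IsHalfAut f ∧
      (¬ ∀ x y : G × Bool, f (cmul x y) = cmul (f x) (f y)) ∧
      (¬ ∀ x y : G × Bool, f (cmul x y) = cmul (f y) (f x))) :
    ∃ m : ℕ, 1 ≤ m ∧
      Nonempty (Subgroup.center G ≃* (Fin m → Multiplicative (ZMod 2))) := by
  obtain ⟨f, ⟨hbij, hf⟩, hna, hnanti⟩ := hhalf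
  have hcenter : (∃ z : G, z ≠ 1 ∧ ∀ x, z*x = x*z) ∧
      (∀ z : G, (∀ x, z*x = x*z) → z*z = 1) := by
    by_cases hp : ∀ g : G, (f (g, false)).2 = false
    · exact main_case f hbij hf hna hnanti hnab hp
    · push_neg at hp
      obtain ⟨g₀, hg₀⟩ := hp
      have hg₀' : (f (g₀, false)).2 = true := by
        cases h : (f (g₀,false)).2
        · exact absurd h hg₀
        · rfl
      exact dih_case f hbij hf hna hnanti hnab g₀ hg₀'
  exact center_package hcenter.1 hcenter.2
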